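/- arXiv:2002.04730 — 3 statements merged into one kernel-verified Lean document; each statement's English description precedes it below -/
import Mathlib

section
/- Let V : ℝ → ℝ with ∫(1+|x|)|V(x)|dx < ∞, and let B_+ : ℝ × ℝ → ℝ be measurable, supported in {y ≥ 0} in the second variable, and satisfy the Marchenko equation B_+(x,y) = ∫_{x+y}^∞ V(t)dt + ∫_0^y ∫_{x+y−z}^∞ V(t) B_+(t,z) dt dz for y ≥ 0, together with the a priori bound |B_+(x,y)| ≤ e^{γ^+(x)} ρ^+(x+y) where ρ^+(u)=∫_u^∞|V| and γ^+(x)=∫_x^∞ (t−x)|V(t)|dt. Then there is a constant c depending only on ∫(1+|x|)|V(x)|dx such that for all x ∈ ℝ, ∫_0^∞ |B_+(x,y)| dy ≤ c(1 + max(0, −x)). -/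
open MeasureTheory intervalIntegral
open Set ENNReal

lemma mk_tonelliA (W : ℝ → ℝ) (hW : Measurable W) (x : ℝ) :
    ∫⁻ y in Set.Ioi (0:ℝ), ∫⁻ t in Set.Ioi (x+y), ENNReal.ofReal (W t) =
    ∫⁻ t : ℝ, ENNReal.ofReal (W t) * ENNReal.ofReal (t - x) := by
  set F : ℝ → ℝ → ℝ≥0∞ := fun y t =>
    if 0 < y ∧ x + y < t then ENNReal.ofReal (W t) else 0 with hF
  have hSm : MeasurableSet {p : ℝ × ℝ | 0 < p.1 ∧ x + p.1 < p.2} := by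
    apply MeasurableSet.inter
    · exact measurableSet_lt measurable_const measurable_fst
    · exact measurableSet_lt (measurable_const.add measurable_fst) measurable_snd
  have hFm : Measurable (Function.uncurry F) := by
    have : Function.uncurry F = fun p : ℝ × ℝ =>
        Set.indicator {p : ℝ × ℝ | 0 < p.1 ∧ x + p.1 < p.2}
          (fun p => ENNReal.ofReal (W p.2)) p := by
      funext p
      simp [Function.uncurry, hF, Set.indicator]
    rw [this]
    exact (hW.comp measurable_snd).ennreal_ofReal.indicator hSm
  have h1 : ∫⁻ y in Set.Ioi (0:ℝ), ∫⁻ t in Set.Ioi (x+y), ENNReal.ofReal (W t) =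
      ∫⁻ y, ∫⁻ t, F y t := by
    rw [← lintegral_indicator measurableSet_Ioi _]
    congr 1
    funext y
    by_cases hy : 0 < y
    · rw [Set.indicator_of_mem (by exact hy)]
      rw [← lintegral_indicator measurableSet_Ioi _]
      congr 1; funext t
      by_cases ht : x + y < t <;> simp [hF, Set.indicator, hy, ht]
    · rw [Set.indicator_of_notMem (by simpa using hy)]
      have : ∀ t, F y t = 0 := by intro t; simp [hF, hy]
      simp [this]
  rw [h1, lintegral_lintegral_swap hFm.aemeasurable]
  congr 1
  funext t
  have h2 : ∀ y, F y t = Set.indicator (Set.Ioo (0:ℝ) (t - x))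
      (fun _ => ENNReal.ofReal (W t)) y := by
    intro y
    have hiff : (0 < y ∧ x + y < t) ↔ y ∈ Set.Ioo (0:ℝ) (t - x) := by
      simp only [Set.mem_Ioo]
      constructor
      · rintro ⟨ha, hb⟩; exact ⟨ha, by linarith⟩
      · rintro ⟨ha, hb⟩; exact ⟨ha, by linarith⟩
    show (if 0 < y ∧ x + y < t then ENNReal.ofReal (W t) else 0) = _
    rw [Set.indicator_apply]
    by_cases hy : y ∈ Set.Ioo (0:ℝ) (t - x)
    · rw [if_pos (hiff.mpr hy), if_pos hy]
    · rw [if_neg (fun h => hy (hiff.mp h)), if_neg hy]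
  simp_rw [h2]
  rw [lintegral_indicator measurableSet_Ioo _, setLIntegral_const, Real.volume_Ioo, sub_zero]

lemma mk_tonelliB (W : ℝ → ℝ) (hW : Measurable W) (B : ℝ → ℝ → ℝ)
    (hB : Measurable (Function.uncurry B)) (x : ℝ) :
    ∫⁻ y in Set.Ioi (0:ℝ), ∫⁻ z in Set.Ioc (0:ℝ) y, ∫⁻ t in Set.Ioi (x + y - z),
        ENNReal.ofReal (W t) * ENNReal.ofReal |B t z| =
    ∫⁻ t : ℝ, ENNReal.ofReal (t - x) * (ENNReal.ofReal (W t) *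
        ∫⁻ z in Set.Ioi (0:ℝ), ENNReal.ofReal |B t z|) := by
  classical
  set H : ℝ → ℝ → ℝ≥0∞ := fun t z => ENNReal.ofReal (W t) * ENNReal.ofReal |B t z| with hHdef
  have hHm : Measurable (fun p : ℝ × ℝ => H p.1 p.2) := by
    exact ((hW.comp measurable_fst).ennreal_ofReal).mul
      ((hB.comp measurable_id).abs.ennreal_ofReal)
  set F : ℝ → ℝ → ℝ → ℝ≥0∞ := fun y z t =>
    if 0 < y ∧ 0 < z ∧ z ≤ y ∧ x + y - z < t then H t z else 0 with hFdef
  have hSm : MeasurableSet {q : (ℝ × ℝ) × ℝ |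
      0 < q.1.1 ∧ 0 < q.1.2 ∧ q.1.2 ≤ q.1.1 ∧ x + q.1.1 - q.1.2 < q.2} := by
    refine MeasurableSet.inter ?_ (MeasurableSet.inter ?_ (MeasurableSet.inter ?_ ?_))
    · exact measurableSet_lt measurable_const (measurable_fst.comp measurable_fst)
    · exact measurableSet_lt measurable_const (measurable_snd.comp measurable_fst)
    · exact measurableSet_le (measurable_snd.comp measurable_fst)
        (measurable_fst.comp measurable_fst)
    · exact measurableSet_lt
        ((measurable_const.add (measurable_fst.comp measurable_fst)).sub
          (measurable_snd.comp measurable_fst)) measurable_snd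
  have hFm : Measurable (fun q : (ℝ × ℝ) × ℝ => F q.1.1 q.1.2 q.2) := by
    apply Measurable.ite hSm
    · exact hHm.comp (measurable_snd.prodMk (measurable_snd.comp measurable_fst))
    · exact measurable_const
  -- step A : rewrite LHS as unrestricted triple lintegral
  have hA : ∫⁻ y in Set.Ioi (0:ℝ), ∫⁻ z in Set.Ioc (0:ℝ) y, ∫⁻ t in Set.Ioi (x + y - z),
      H t z = ∫⁻ y, ∫⁻ z, ∫⁻ t, F y z t := by
    rw [← lintegral_indicator measurableSet_Ioi _]
    congr 1
    funext y
    by_cases hy : 0 < y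
    · rw [Set.indicator_of_mem (by exact hy)]
      rw [← lintegral_indicator measurableSet_Ioc _]
      congr 1
      funext z
      by_cases hz : z ∈ Set.Ioc (0:ℝ) y
      · rw [Set.indicator_of_mem hz]
        rw [← lintegral_indicator measurableSet_Ioi _]
        congr 1
        funext t
        rw [Set.indicator_apply]
        by_cases ht : t ∈ Set.Ioi (x + y - z)
        · rw [if_pos ht]
          simp only [hFdef]
          rw [if_pos ⟨hy, hz.1, hz.2, ht⟩]
        · rw [if_neg ht]
          simp only [hFdef]
          rw [if_neg (fun h => ht h.2.2.2)]
      · rw [Set.indicator_of_notMem hz]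
        have : ∀ t, F y z t = 0 := by
          intro t
          simp only [hFdef]
          rw [if_neg]
          rintro ⟨-, h1, h2, -⟩
          exact hz ⟨h1, h2⟩
        simp [this]
    · rw [Set.indicator_of_notMem (by simpa using hy)]
      have : ∀ z t, F y z t = 0 := by
        intro z t; simp only [hFdef]; rw [if_neg]; rintro ⟨h, -⟩; exact hy h
      simp [this]
  -- swap y and z
  have hswap1 : ∫⁻ y, ∫⁻ z, ∫⁻ t, F y z t = ∫⁻ z, ∫⁻ y, ∫⁻ t, F y z t := by
    apply lintegral_lintegral_swap
    apply Measurable.aemeasurable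
    exact hFm.lintegral_prod_right'
  -- for fixed z, swap y and t
  have hswap2 : ∫⁻ z, ∫⁻ y, ∫⁻ t, F y z t = ∫⁻ z, ∫⁻ t, ∫⁻ y, F y z t := by
    apply lintegral_congr
    intro z
    apply lintegral_lintegral_swap
    apply Measurable.aemeasurable
    exact hFm.comp ((measurable_fst.prodMk measurable_const).prodMk measurable_snd)
  -- compute inner integral over y
  have hy_int : ∀ z t, ∫⁻ y, F y z t =
      if 0 < z then H t z * ENNReal.ofReal (t - x) else 0 := by
    intro z t
    by_cases hz : 0 < z
    · have h2 : ∀ y, F y z t = Set.indicator (Set.Ico z (t - x + z))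
          (fun _ => H t z) y := by
        intro y
        have hiff : (0 < y ∧ 0 < z ∧ z ≤ y ∧ x + y - z < t) ↔ y ∈ Set.Ico z (t - x + z) := by
          simp only [Set.mem_Ico]
          constructor
          · rintro ⟨-, -, h1, h2⟩; exact ⟨h1, by linarith⟩
          · rintro ⟨h1, h2⟩; exact ⟨lt_of_lt_of_le hz h1, hz, h1, by linarith⟩
        simp only [hFdef]
        rw [Set.indicator_apply]
        by_cases hy : y ∈ Set.Ico z (t - x + z)
        · rw [if_pos (hiff.mpr hy), if_pos hy]
        · rw [if_neg (fun h => hy (hiff.mp h)), if_neg hy]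
      simp_rw [h2]
      rw [lintegral_indicator measurableSet_Ico _, setLIntegral_const, Real.volume_Ico,
        if_pos hz]
      congr 2
      ring
    · have : ∀ y, F y z t = 0 := by
        intro y; simp only [hFdef]; rw [if_neg]; rintro ⟨-, h, -⟩; exact hz h
      simp [this, hz]
  -- swap z and t
  have hswap3 : ∫⁻ z, ∫⁻ t, (if 0 < z then H t z * ENNReal.ofReal (t - x) else 0) =
      ∫⁻ t, ∫⁻ z, (if 0 < z then H t z * ENNReal.ofReal (t - x) else 0) := by
    apply lintegral_lintegral_swap
    apply Measurable.aemeasurable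
    apply Measurable.ite (measurableSet_lt measurable_const measurable_fst)
    · exact (hHm.comp (measurable_snd.prodMk measurable_fst)).mul
        ((measurable_snd.sub measurable_const).ennreal_ofReal)
    · exact measurable_const
  calc ∫⁻ y in Set.Ioi (0:ℝ), ∫⁻ z in Set.Ioc (0:ℝ) y, ∫⁻ t in Set.Ioi (x + y - z), H t z
      = ∫⁻ z, ∫⁻ t, ∫⁻ y, F y z t := by rw [hA, hswap1, hswap2]
    _ = ∫⁻ t, ∫⁻ z, (if 0 < z then H t z * ENNReal.ofReal (t - x) else 0) := by
        simp_rw [hy_int]; exact hswap3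
    _ = ∫⁻ t : ℝ, ENNReal.ofReal (t - x) * (ENNReal.ofReal (W t) *
        ∫⁻ z in Set.Ioi (0:ℝ), ENNReal.ofReal |B t z|) := by
        apply lintegral_congr
        intro t
        have : ∀ z, (if 0 < z then H t z * ENNReal.ofReal (t - x) else 0) =
            Set.indicator (Set.Ioi (0:ℝ)) (fun z => H t z * ENNReal.ofReal (t - x)) z := by
          intro z
          rw [Set.indicator_apply]
          by_cases hz : (0:ℝ) < z
          · rw [if_pos hz, if_pos (Set.mem_Ioi.mpr hz)]
          · rw [if_neg hz, if_neg (by simpa using hz)]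
        simp_rw [this]
        rw [lintegral_indicator measurableSet_Ioi _]
        rw [lintegral_mul_const' (ENNReal.ofReal (t - x)) _ ENNReal.ofReal_ne_top]
        rw [hHdef]
        simp only []
        rw [lintegral_const_mul _ (by
          exact ((hB.comp (measurable_const.prodMk measurable_id)).abs.ennreal_ofReal))]
        ring

lemma mk_key (x t : ℝ) (h : x ≤ t) :
    (t - x) * (1 + max 0 (-t)) ≤ (1 + max 0 (-x)) * (1 + |t|) := by
  rcases le_total 0 t with ht | ht
  · rw [max_eq_left (by linarith), abs_of_nonneg ht]
    rcases le_total 0 x with hx | hx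
    · rw [max_eq_left (by linarith)]; nlinarith
    · rw [max_eq_right (by linarith)]; nlinarith
  · rw [max_eq_right (by linarith), abs_of_nonpos ht]
    have hx : x ≤ 0 := le_trans h ht
    rw [max_eq_right (by linarith)]
    nlinarith

/-- Weighted `L¹` bound for the Marchenko kernel `B₊`:
if `∫(1+|x|)|V| < ∞` then `∫_0^∞ |B₊(x,y)| dy ≤ c(1 + max(0,−x))`. -/
theorem marchenko_kernel_L1 (V : ℝ → ℝ) (B : ℝ → ℝ → ℝ)
    (hV : Integrable (fun x => (1 + |x|) * |V x|))
    (hB_meas : Measurable (Function.uncurry B))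
    (hB_supp : ∀ x : ℝ, ∀ y < (0 : ℝ), B x y = 0)
    (hB_eq : ∀ x : ℝ, ∀ y : ℝ, 0 ≤ y →
      B x y = (∫ t in Set.Ioi (x + y), V t) +
        ∫ z in (0 : ℝ)..y, ∫ t in Set.Ioi (x + y - z), V t * B t z)
    (hB_bd : ∀ x y : ℝ, |B x y| ≤
      Real.exp (∫ t in Set.Ioi x, (t - x) * |V t|) * ∫ t in Set.Ioi (x + y), |V t|) :
    ∃ c > (0 : ℝ), ∀ x : ℝ,
      (∫ y in Set.Ioi (0 : ℝ), |B x y|) ≤ c * (1 + max 0 (-x)) := by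
  classical
  -- measurable nonneg representative W of |V|
  have hVabs_aem : AEMeasurable (fun t => |V t|) volume := by
    have h1 : AEMeasurable (fun x => (1 + |x|) * |V x|) volume := hV.aemeasurable
    have h2 : Measurable fun x : ℝ => (1 + |x|)⁻¹ :=
      (continuous_const.add continuous_abs).inv₀ (fun x => (by positivity : (1:ℝ) + |x| ≠ 0)) |>.measurable
    have h3 : AEMeasurable (fun x => (1 + |x|)⁻¹ * ((1 + |x|) * |V x|)) volume :=
      h2.aemeasurable.mul h1
    refine h3.congr (Filter.Eventually.of_forall fun x => ?_)
    have : (1 : ℝ) + |x| ≠ 0 := by positivity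
    field_simp
  obtain ⟨W0, hW0meas, hW0ae⟩ := hVabs_aem
  set W : ℝ → ℝ := fun t => |W0 t| with hWdef
  have hWmeas : Measurable W := hW0meas.abs
  have hW0' : ∀ t, 0 ≤ W t := fun t => abs_nonneg _
  have hWae : (fun t => |V t|) =ᵐ[volume] W := by
    refine hW0ae.mono fun t ht => ?_
    rw [hWdef]; simp only []
    rw [← ht, abs_abs]
  -- the weight g and its integral M
  set g : ℝ → ℝ := fun t => (1 + |t|) * W t with hgdef
  have hgmeas : Measurable g :=
    ((continuous_const.add continuous_abs).measurable).mul hWmeas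
  have hg_int : Integrable g := by
    refine hV.congr ?_
    exact hWae.mono fun t ht => by rw [hgdef]; simp only []; rw [← ht]
  have hg0 : ∀ t, 0 ≤ g t := fun t => mul_nonneg (by positivity) (hW0' t)
  set M : ℝ := ∫ t, g t with hMdef
  have hM0 : 0 ≤ M := integral_nonneg hg0
  have hW_int : Integrable W := by
    refine hg_int.mono' hWmeas.aestronglyMeasurable ?_
    refine Filter.Eventually.of_forall fun t => ?_
    rw [Real.norm_eq_abs, abs_of_nonneg (hW0' t)]
    simp only [hgdef]
    nlinarith [hW0' t, abs_nonneg t]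
  -- rho and gamma
  set ρ : ℝ → ℝ := fun u => ∫ t in Set.Ioi u, W t with hρdef
  set γ : ℝ → ℝ := fun x => ∫ t in Set.Ioi x, (t - x) * W t with hγdef
  have hρ_eq : ∀ u, ∫ t in Set.Ioi u, |V t| = ρ u := fun u =>
    integral_congr_ae (ae_restrict_of_ae (hWae.mono fun t ht => ht))
  have hγ_eq : ∀ x, ∫ t in Set.Ioi x, (t - x) * |V t| = γ x := fun x =>
    integral_congr_ae (ae_restrict_of_ae (hWae.mono fun t ht => by
      dsimp only at ht ⊢; rw [ht]))
  have hρ0 : ∀ u, 0 ≤ ρ u := fun u =>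
    setIntegral_nonneg measurableSet_Ioi fun t _ => hW0' t
  have hkey' : ∀ x t : ℝ, x ≤ t → t - x ≤ (1 + max 0 (-x)) * (1 + |t|) := by
    intro x t h
    calc t - x ≤ (t - x) * (1 + max 0 (-t)) := by
          nlinarith [le_max_left (0:ℝ) (-t), sub_nonneg.mpr h]
      _ ≤ (1 + max 0 (-x)) * (1 + |t|) := mk_key x t h
  have hγ_intOn : ∀ x : ℝ, IntegrableOn (fun t => (t - x) * W t) (Set.Ioi x) := by
    intro x
    refine Integrable.mono' ((hg_int.const_mul (1 + max 0 (-x))).integrableOn) ?_ ?_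
    · exact ((measurable_id.sub measurable_const).mul hWmeas).aestronglyMeasurable
    · refine ae_restrict_of_forall_mem measurableSet_Ioi fun t ht => ?_
      rw [Real.norm_eq_abs, abs_of_nonneg
        (mul_nonneg (sub_nonneg.mpr (le_of_lt ht)) (hW0' t))]
      calc (t - x) * W t ≤ ((1 + max 0 (-x)) * (1 + |t|)) * W t := by
            exact mul_le_mul_of_nonneg_right (hkey' x t (le_of_lt ht)) (hW0' t)
        _ = (1 + max 0 (-x)) * g t := by rw [hgdef]; ring
  have hγ0 : ∀ x, 0 ≤ γ x := fun x =>
    setIntegral_nonneg measurableSet_Ioi fun t ht =>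
      mul_nonneg (sub_nonneg.mpr (le_of_lt ht)) (hW0' t)
  have hγ_le : ∀ x, γ x ≤ (1 + max 0 (-x)) * M := by
    intro x
    rw [hγdef]
    calc ∫ t in Set.Ioi x, (t - x) * W t
        ≤ ∫ t in Set.Ioi x, (1 + max 0 (-x)) * g t := by
          refine setIntegral_mono_on (hγ_intOn x)
            ((hg_int.const_mul _).integrableOn) measurableSet_Ioi fun t ht => ?_
          calc (t - x) * W t ≤ ((1 + max 0 (-x)) * (1 + |t|)) * W t :=
                mul_le_mul_of_nonneg_right (hkey' x t (le_of_lt ht)) (hW0' t)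
            _ = (1 + max 0 (-x)) * g t := by rw [hgdef]; ring
      _ = (1 + max 0 (-x)) * ∫ t in Set.Ioi x, g t := by rw [MeasureTheory.integral_const_mul]
      _ ≤ (1 + max 0 (-x)) * M := by
          refine mul_le_mul_of_nonneg_left ?_ (by positivity)
          exact setIntegral_le_integral hg_int
            (Filter.Eventually.of_forall fun t => hg0 t)
  -- lintegral quantities
  set N : ℝ → ℝ≥0∞ := fun x => ∫⁻ y in Set.Ioi (0:ℝ), ENNReal.ofReal |B x y| with hNdef
  set σ : ℝ → ℝ := fun x => (N x).toReal with hσdef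
  have hp0 : ∀ x, ∫ y in Set.Ioi (0:ℝ), |B x y| = σ x := by
    intro x
    rw [integral_eq_lintegral_of_nonneg_ae
      (Filter.Eventually.of_forall fun y => abs_nonneg _)
      ((hB_meas.of_uncurry_left).abs.aestronglyMeasurable)]
  have hγ_lint : ∀ x, ∫⁻ t : ℝ, ENNReal.ofReal (W t) * ENNReal.ofReal (t - x)
      = ENNReal.ofReal (γ x) := by
    intro x
    have h1 : ENNReal.ofReal (γ x) = ∫⁻ t in Set.Ioi x, ENNReal.ofReal ((t - x) * W t) := by
      rw [hγdef]
      exact ofReal_integral_eq_lintegral_ofReal (hγ_intOn x)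
        (ae_restrict_of_forall_mem measurableSet_Ioi fun t ht =>
          mul_nonneg (sub_nonneg.mpr ht.le) (hW0' t))
    rw [h1, ← lintegral_indicator measurableSet_Ioi _]
    apply lintegral_congr
    intro t
    rw [Set.indicator_apply]
    by_cases ht : t ∈ Set.Ioi x
    · rw [if_pos ht, ENNReal.ofReal_mul (sub_nonneg.mpr (le_of_lt ht)), mul_comm]
    · rw [if_neg ht]
      have : t - x ≤ 0 := by simp only [Set.mem_Ioi, not_lt] at ht; linarith
      rw [ENNReal.ofReal_eq_zero.mpr this, mul_zero]
  have hρ_lint : ∀ u, ENNReal.ofReal (ρ u) = ∫⁻ t in Set.Ioi u, ENNReal.ofReal (W t) :=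
    fun u => ofReal_integral_eq_lintegral_ofReal hW_int.integrableOn
      (Filter.Eventually.of_forall fun t => hW0' t)
  have hρ_anti : Antitone ρ := by
    intro u v huv
    exact setIntegral_mono_set hW_int.integrableOn
      (Filter.Eventually.of_forall fun t => hW0' t)
      (HasSubset.Subset.eventuallyLE (Set.Ioi_subset_Ioi huv))
  have hρy : ∀ x : ℝ, ∫⁻ y in Set.Ioi (0:ℝ), ENNReal.ofReal (ρ (x + y))
      = ENNReal.ofReal (γ x) := by
    intro x
    have h : ∀ y : ℝ, ENNReal.ofReal (ρ (x + y))
        = ∫⁻ t in Set.Ioi (x + y), ENNReal.ofReal (W t) := fun y => hρ_lint (x + y)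
    simp_rw [h]
    rw [mk_tonelliA W hWmeas x, hγ_lint x]
  have hp1 : ∀ x, N x ≤ ENNReal.ofReal (Real.exp (γ x) * γ x) := by
    intro x
    have h1 : N x ≤ ∫⁻ y in Set.Ioi (0:ℝ),
        ENNReal.ofReal (Real.exp (γ x)) * ENNReal.ofReal (ρ (x + y)) := by
      refine lintegral_mono fun y => ?_
      rw [← ENNReal.ofReal_mul (Real.exp_nonneg _)]
      refine ENNReal.ofReal_le_ofReal ?_
      calc |B x y| ≤ Real.exp (∫ t in Set.Ioi x, (t - x) * |V t|)
            * ∫ t in Set.Ioi (x + y), |V t| := hB_bd x y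
        _ = Real.exp (γ x) * ρ (x + y) := by rw [hγ_eq, hρ_eq]
    rw [lintegral_const_mul' _ _ ENNReal.ofReal_ne_top, hρy x] at h1
    calc N x ≤ _ := h1
      _ = ENNReal.ofReal (Real.exp (γ x) * γ x) :=
          (ENNReal.ofReal_mul (Real.exp_nonneg _)).symm
  have hN_top : ∀ x, N x ≠ ⊤ := fun x => ne_top_of_le_ne_top ENNReal.ofReal_ne_top (hp1 x)
  have hσ0 : ∀ x, 0 ≤ σ x := fun x => ENNReal.toReal_nonneg
  have hσ_le : ∀ x, σ x ≤ Real.exp (γ x) * γ x := fun x =>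
    ENNReal.toReal_le_of_le_ofReal (mul_nonneg (Real.exp_nonneg _) (hγ0 x)) (hp1 x)
  -- the key Marchenko inequality
  have hp2 : ∀ x, N x ≤ ENNReal.ofReal (γ x) +
      ∫⁻ t : ℝ, ENNReal.ofReal (t - x) * (ENNReal.ofReal (W t) * N t) := by
    intro x
    have hpt : ∀ y ∈ Set.Ioi (0:ℝ), ENNReal.ofReal |B x y| ≤
        ENNReal.ofReal (ρ (x + y)) +
        ∫⁻ z in Set.Ioc (0:ℝ) y, ∫⁻ t in Set.Ioi (x + y - z),
          ENNReal.ofReal (W t) * ENNReal.ofReal |B t z| := by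
      intro y hy
      have hy0 : (0:ℝ) ≤ y := le_of_lt hy
      have hfirst : ENNReal.ofReal |∫ t in Set.Ioi (x + y), V t|
          ≤ ENNReal.ofReal (ρ (x + y)) := by
        refine ENNReal.ofReal_le_ofReal ?_
        rw [← hρ_eq (x + y)]
        calc |∫ t in Set.Ioi (x + y), V t| = ‖∫ t in Set.Ioi (x + y), V t‖ :=
              (Real.norm_eq_abs _).symm
          _ ≤ ∫ t in Set.Ioi (x + y), ‖V t‖ :=
              MeasureTheory.norm_integral_le_integral_norm _
          _ = ∫ t in Set.Ioi (x + y), |V t| := by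
              simp_rw [Real.norm_eq_abs]
      have hsecond : ENNReal.ofReal
          |∫ z in (0:ℝ)..y, ∫ t in Set.Ioi (x + y - z), V t * B t z|
          ≤ ∫⁻ z in Set.Ioc (0:ℝ) y, ∫⁻ t in Set.Ioi (x + y - z),
            ENNReal.ofReal (W t) * ENNReal.ofReal |B t z| := by
        rw [intervalIntegral.integral_of_le hy0, ← Real.norm_eq_abs]
        calc ENNReal.ofReal ‖∫ z in Set.Ioc (0:ℝ) y, ∫ t in Set.Ioi (x + y - z), V t * B t z‖
            ≤ ∫⁻ z in Set.Ioc (0:ℝ) y,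
                ENNReal.ofReal ‖∫ t in Set.Ioi (x + y - z), V t * B t z‖ := by
              refine le_trans (ENNReal.ofReal_le_ofReal
                (MeasureTheory.norm_integral_le_lintegral_norm _)) ?_
              exact ENNReal.ofReal_toReal_le
          _ ≤ ∫⁻ z in Set.Ioc (0:ℝ) y, ∫⁻ t in Set.Ioi (x + y - z),
              ENNReal.ofReal (W t) * ENNReal.ofReal |B t z| := by
              refine lintegral_mono fun z => ?_
              calc ENNReal.ofReal ‖∫ t in Set.Ioi (x + y - z), V t * B t z‖
                  ≤ ∫⁻ t in Set.Ioi (x + y - z), ENNReal.ofReal ‖V t * B t z‖ := by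
                    refine le_trans (ENNReal.ofReal_le_ofReal
                      (MeasureTheory.norm_integral_le_lintegral_norm _)) ?_
                    exact ENNReal.ofReal_toReal_le
                _ = ∫⁻ t in Set.Ioi (x + y - z),
                    ENNReal.ofReal (W t) * ENNReal.ofReal |B t z| := by
                    refine lintegral_congr_ae (ae_restrict_of_ae (hWae.mono fun t ht => ?_))
                    dsimp only at ht ⊢
                    rw [Real.norm_eq_abs, abs_mul, ht, ENNReal.ofReal_mul (hW0' t)]
      calc ENNReal.ofReal |B x y|
          = ENNReal.ofReal |(∫ t in Set.Ioi (x + y), V t) +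
              ∫ z in (0:ℝ)..y, ∫ t in Set.Ioi (x + y - z), V t * B t z| := by
            rw [← hB_eq x y hy0]
        _ ≤ ENNReal.ofReal (|∫ t in Set.Ioi (x + y), V t| +
              |∫ z in (0:ℝ)..y, ∫ t in Set.Ioi (x + y - z), V t * B t z|) :=
            ENNReal.ofReal_le_ofReal (abs_add_le _ _)
        _ = ENNReal.ofReal |∫ t in Set.Ioi (x + y), V t| +
            ENNReal.ofReal |∫ z in (0:ℝ)..y, ∫ t in Set.Ioi (x + y - z), V t * B t z| :=
            ENNReal.ofReal_add (abs_nonneg _) (abs_nonneg _)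
        _ ≤ _ := add_le_add hfirst hsecond
    have hmeasρ : Measurable fun y : ℝ => ENNReal.ofReal (ρ (x + y)) := by
      have : Antitone fun y : ℝ => ρ (x + y) := fun y₁ y₂ h =>
        hρ_anti (by linarith)
      exact this.measurable.ennreal_ofReal
    have h2 : N x ≤ ∫⁻ y in Set.Ioi (0:ℝ), (ENNReal.ofReal (ρ (x + y)) +
        ∫⁻ z in Set.Ioc (0:ℝ) y, ∫⁻ t in Set.Ioi (x + y - z),
          ENNReal.ofReal (W t) * ENNReal.ofReal |B t z|) :=
      lintegral_mono_ae (ae_restrict_of_forall_mem measurableSet_Ioi hpt)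
    rw [lintegral_add_left hmeasρ, hρy x, mk_tonelliB W hWmeas B hB_meas x] at h2
    exact h2
  -- choose a cutoff point a with small tail mass on the left
  obtain ⟨a, ha0, ha⟩ : ∃ a : ℝ, a ≤ 0 ∧ ∫ t in Set.Iic a, g t ≤ 1/2 := by
    have h0 : ∀ n : ℕ, ∫ t in Set.Iic (-(n:ℝ)), g t
        = ∫ t, Set.indicator (Set.Iic (-(n:ℝ))) g t := fun n =>
      (MeasureTheory.integral_indicator measurableSet_Iic).symm
    have htend : Filter.Tendsto (fun n : ℕ => ∫ t, Set.indicator (Set.Iic (-(n:ℝ))) g t)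
        Filter.atTop (nhds (∫ t : ℝ, (0:ℝ))) := by
      refine tendsto_integral_of_dominated_convergence g
        (fun n => (hgmeas.indicator measurableSet_Iic).aestronglyMeasurable) hg_int
        (fun n => ?_) ?_
      · refine Filter.Eventually.of_forall fun t => ?_
        rw [Real.norm_eq_abs, abs_of_nonneg (Set.indicator_nonneg (fun s _ => hg0 s) t)]
        exact Set.indicator_le_self' (fun s _ => hg0 s) t
      · refine Filter.Eventually.of_forall fun t => ?_
        have hev : ∀ᶠ n : ℕ in Filter.atTop,
            Set.indicator (Set.Iic (-(n:ℝ))) g t = 0 := by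
          obtain ⟨m, hm⟩ := exists_nat_gt (-t)
          refine Filter.eventually_atTop.mpr ⟨m, fun n hn => ?_⟩
          apply Set.indicator_of_notMem
          simp only [Set.mem_Iic, not_le]
          have : (m:ℝ) ≤ n := Nat.cast_le.mpr hn
          linarith
        exact Filter.Tendsto.congr' (hev.mono fun n hn => hn.symm) tendsto_const_nhds
    rw [MeasureTheory.integral_zero] at htend
    have hev : ∀ᶠ n : ℕ in Filter.atTop,
        (∫ t, Set.indicator (Set.Iic (-(n:ℝ))) g t) < 1/2 :=
      htend.eventually_lt_const (by norm_num)
    obtain ⟨n, hn⟩ := hev.exists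
    exact ⟨-(n:ℝ), neg_nonpos.mpr (Nat.cast_nonneg n), by rw [h0]; exact hn.le⟩
  -- global bound to the right of a
  set K : ℝ := M * (1 + (-a)) * Real.exp (M * (1 + (-a))) with hKdef
  have h1a : (0:ℝ) ≤ 1 + (-a) := by linarith
  have hK0 : 0 ≤ K := by
    refine mul_nonneg (mul_nonneg hM0 h1a) (Real.exp_nonneg _)
  have hKbd : ∀ t, a ≤ t → σ t ≤ K := by
    intro t htt
    have hmt : max 0 (-t) ≤ -a := max_le (by linarith) (by linarith)
    have h1 : γ t ≤ M * (1 + (-a)) := by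
      calc γ t ≤ (1 + max 0 (-t)) * M := hγ_le t
        _ ≤ (1 + (-a)) * M := mul_le_mul_of_nonneg_right (by linarith) hM0
        _ = M * (1 + (-a)) := mul_comm _ _
    calc σ t ≤ Real.exp (γ t) * γ t := hσ_le t
      _ ≤ Real.exp (M * (1 + (-a))) * (M * (1 + (-a))) :=
          mul_le_mul (Real.exp_le_exp.mpr h1) h1 (hγ0 t) (Real.exp_nonneg _)
      _ = K := by rw [hKdef]; ring
  have hden : ∀ t : ℝ, 0 < 1 + max 0 (-t) := fun t => by
    have := le_max_left (0:ℝ) (-t); linarith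
  -- the Gronwall estimate to the left of a
  have hmain : ∀ x, x ≤ a → σ x ≤ (2 * (M + K * M)) * (1 + max 0 (-x)) := by
    intro x hxa
    have hx0 : x ≤ 0 := le_trans hxa ha0
    set ψ : ℝ → ℝ := fun t => σ t / (1 + max 0 (-t)) with hψdef
    have hψ0 : ∀ t, 0 ≤ ψ t := fun t => div_nonneg (hσ0 t) (hden t).le
    have hψσ : ∀ t, σ t = ψ t * (1 + max 0 (-t)) := fun t => by
      rw [hψdef]
      exact (div_mul_cancel₀ (σ t) (hden t).ne').symm
    have hbdd : BddAbove (ψ '' Set.Icc x a) := by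
      refine ⟨Real.exp (M * (1 + (-x))) * (M * (1 + (-x))), ?_⟩
      rintro s ⟨t, ⟨htx, hta⟩, rfl⟩
      have hmt : max 0 (-t) ≤ -x := max_le (by linarith) (by linarith)
      have h1 : γ t ≤ M * (1 + (-x)) := by
        calc γ t ≤ (1 + max 0 (-t)) * M := hγ_le t
          _ ≤ (1 + (-x)) * M := mul_le_mul_of_nonneg_right (by linarith) hM0
          _ = M * (1 + (-x)) := mul_comm _ _
      calc ψ t ≤ σ t := div_le_self (hσ0 t) (by have := le_max_left (0:ℝ) (-t); linarith)
        _ ≤ Real.exp (γ t) * γ t := hσ_le t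
        _ ≤ Real.exp (M * (1 + (-x))) * (M * (1 + (-x))) :=
            mul_le_mul (Real.exp_le_exp.mpr h1) h1 (hγ0 t) (Real.exp_nonneg _)
    set S : ℝ := sSup (ψ '' Set.Icc x a) with hSdef
    have haIcc : a ∈ Set.Icc x a := ⟨hxa, le_refl a⟩
    have hS0 : 0 ≤ S := le_trans (hψ0 a) (le_csSup hbdd ⟨a, haIcc, rfl⟩)
    set R : ℝ := S * (1/2) + K * M with hRdef
    have hR0 : 0 ≤ R := by
      rw [hRdef]
      have := mul_nonneg hK0 hM0
      linarith
    have hest : ∀ t ∈ Set.Icc x a, ψ t ≤ M + R := by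
      intro t htmem
      obtain ⟨htx, hta⟩ := htmem
      set q : ℝ → ℝ := fun s =>
        (1 + max 0 (-t)) * ((1 + |s|) * W s) * (if s ≤ a then S else K) with hqdef
      have hq0 : ∀ s, 0 ≤ q s := by
        intro s
        simp only [hqdef]
        refine mul_nonneg (mul_nonneg (hden t).le
          (mul_nonneg (by positivity) (hW0' s))) ?_
        rcases le_or_gt s a with h | h
        · rw [if_pos h]; exact hS0
        · rw [if_neg (not_le.mpr h)]; exact hK0
      have hqmeas : Measurable q := by
        refine ((measurable_const.mul
          (((continuous_const.add continuous_abs).measurable).mul hWmeas)).mul ?_)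
        exact Measurable.ite measurableSet_Iic measurable_const measurable_const
      have hQ : ∀ s : ℝ, ENNReal.ofReal (s - t) * (ENNReal.ofReal (W s) * N s)
          ≤ ENNReal.ofReal (q s) := by
        intro s
        rcases le_or_gt s t with hst | hst
        · rw [ENNReal.ofReal_eq_zero.mpr (by linarith), zero_mul]
          exact zero_le
        · have hNs : N s = ENNReal.ofReal (σ s) := (ENNReal.ofReal_toReal (hN_top s)).symm
          rw [hNs, ← ENNReal.ofReal_mul (hW0' s),
            ← ENNReal.ofReal_mul (sub_nonneg.mpr hst.le)]
          refine ENNReal.ofReal_le_ofReal ?_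
          simp only [hqdef]
          rcases le_or_gt s a with hsa | hsa
          · have hψs : ψ s ≤ S := le_csSup hbdd ⟨s, ⟨by linarith, hsa⟩, rfl⟩
            have hσs : σ s ≤ S * (1 + max 0 (-s)) := by
              rw [hψσ s]
              exact mul_le_mul_of_nonneg_right hψs (hden s).le
            rw [if_pos hsa]
            calc (s - t) * (W s * σ s)
                ≤ (s - t) * (W s * (S * (1 + max 0 (-s)))) := by
                  refine mul_le_mul_of_nonneg_left
                    (mul_le_mul_of_nonneg_left hσs (hW0' s))
                    (sub_nonneg.mpr hst.le)
              _ = ((s - t) * (1 + max 0 (-s))) * (W s * S) := by ring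
              _ ≤ ((1 + max 0 (-t)) * (1 + |s|)) * (W s * S) :=
                  mul_le_mul_of_nonneg_right (mk_key t s hst.le)
                    (mul_nonneg (hW0' s) hS0)
              _ = (1 + max 0 (-t)) * ((1 + |s|) * W s) * S := by ring
          · have hσs : σ s ≤ K := hKbd s (by linarith)
            rw [if_neg (not_le.mpr hsa)]
            calc (s - t) * (W s * σ s)
                ≤ (s - t) * (W s * K) := by
                  refine mul_le_mul_of_nonneg_left
                    (mul_le_mul_of_nonneg_left hσs (hW0' s))
                    (sub_nonneg.mpr hst.le)
              _ ≤ ((1 + max 0 (-t)) * (1 + |s|)) * (W s * K) :=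
                  mul_le_mul_of_nonneg_right (hkey' t s hst.le)
                    (mul_nonneg (hW0' s) hK0)
              _ = (1 + max 0 (-t)) * ((1 + |s|) * W s) * K := by ring
      have hq_int : Integrable q := by
        refine (hg_int.const_mul ((1 + max 0 (-t)) * max S K)).mono'
          hqmeas.aestronglyMeasurable ?_
        refine Filter.Eventually.of_forall fun s => ?_
        rw [Real.norm_eq_abs, abs_of_nonneg (hq0 s)]
        simp only [hqdef, hgdef]
        have hA0 : 0 ≤ (1 + max 0 (-t)) * ((1 + |s|) * W s) :=
          mul_nonneg (hden t).le (mul_nonneg (by positivity) (hW0' s))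
        rcases le_or_gt s a with h | h
        · rw [if_pos h]
          calc (1 + max 0 (-t)) * ((1 + |s|) * W s) * S
              ≤ (1 + max 0 (-t)) * ((1 + |s|) * W s) * max S K :=
                mul_le_mul_of_nonneg_left (le_max_left S K) hA0
            _ = (1 + max 0 (-t)) * max S K * ((1 + |s|) * W s) := by ring
        · rw [if_neg (not_le.mpr h)]
          calc (1 + max 0 (-t)) * ((1 + |s|) * W s) * K
              ≤ (1 + max 0 (-t)) * ((1 + |s|) * W s) * max S K :=
                mul_le_mul_of_nonneg_left (le_max_right S K) hA0
            _ = (1 + max 0 (-t)) * max S K * ((1 + |s|) * W s) := by ring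
      have hq1_int : Integrable
          (fun s => ((1 + max 0 (-t)) * S) * Set.indicator (Set.Iic a) g s) :=
        (hg_int.indicator measurableSet_Iic).const_mul _
      have hq2_int : Integrable (fun s => ((1 + max 0 (-t)) * K) * g s) :=
        hg_int.const_mul _
      have hq_ptle : ∀ s, q s ≤ ((1 + max 0 (-t)) * S) * Set.indicator (Set.Iic a) g s
          + ((1 + max 0 (-t)) * K) * g s := by
        intro s
        simp only [hqdef]
        have hg2 : (0:ℝ) ≤ ((1 + max 0 (-t)) * K) * g s :=
          mul_nonneg (mul_nonneg (hden t).le hK0) (hg0 s)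
        rcases le_or_gt s a with h | h
        · rw [if_pos h, Set.indicator_of_mem (show s ∈ Set.Iic a from h) g]
          simp only [hgdef]
          simp only [hgdef] at hg2
          have heq : (1 + max 0 (-t)) * ((1 + |s|) * W s) * S
              = ((1 + max 0 (-t)) * S) * ((1 + |s|) * W s) := by ring
          linarith [hg2]
        · rw [if_neg (not_le.mpr h), Set.indicator_of_notMem (show s ∉ Set.Iic a from not_le.mpr h) g]
          simp only [hgdef]
          simp only [hgdef] at hg2
          have heq : (1 + max 0 (-t)) * ((1 + |s|) * W s) * K
              = ((1 + max 0 (-t)) * K) * ((1 + |s|) * W s) := by ring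
          linarith [hg2]
      have hqint_le : ∫ s, q s ≤ (1 + max 0 (-t)) * R := by
        have h1 : ∫ s, q s ≤ ∫ s, (((1 + max 0 (-t)) * S) * Set.indicator (Set.Iic a) g s
            + ((1 + max 0 (-t)) * K) * g s) :=
          integral_mono hq_int (hq1_int.add hq2_int) hq_ptle
        rw [integral_add hq1_int hq2_int, MeasureTheory.integral_const_mul, MeasureTheory.integral_const_mul,
          MeasureTheory.integral_indicator measurableSet_Iic] at h1
        have h2 : (1 + max 0 (-t)) * S * ∫ s in Set.Iic a, g s
            ≤ (1 + max 0 (-t)) * S * (1/2) :=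
          mul_le_mul_of_nonneg_left ha (mul_nonneg (hden t).le hS0)
        rw [hRdef]
        nlinarith [h1, h2]
      have hlint : ∫⁻ s : ℝ, ENNReal.ofReal (s - t) * (ENNReal.ofReal (W s) * N s)
          ≤ ENNReal.ofReal ((1 + max 0 (-t)) * R) := by
        calc ∫⁻ s : ℝ, ENNReal.ofReal (s - t) * (ENNReal.ofReal (W s) * N s)
            ≤ ∫⁻ s : ℝ, ENNReal.ofReal (q s) := lintegral_mono hQ
          _ = ENNReal.ofReal (∫ s, q s) :=
              (ofReal_integral_eq_lintegral_ofReal hq_int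
                (Filter.Eventually.of_forall hq0)).symm
          _ ≤ ENNReal.ofReal ((1 + max 0 (-t)) * R) := ENNReal.ofReal_le_ofReal hqint_le
      have hNt : N t ≤ ENNReal.ofReal (γ t + (1 + max 0 (-t)) * R) := by
        refine le_trans (hp2 t) ?_
        rw [ENNReal.ofReal_add (hγ0 t) (mul_nonneg (hden t).le hR0)]
        exact add_le_add_right hlint _
      have hσt : σ t ≤ γ t + (1 + max 0 (-t)) * R :=
        ENNReal.toReal_le_of_le_ofReal
          (by have := mul_nonneg (hden t).le hR0; linarith [hγ0 t]) hNt
      rw [hψdef]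
      refine (div_le_iff₀ (hden t)).mpr ?_
      nlinarith [hγ_le t, hσt]
    have hSle : S ≤ M + R := by
      refine csSup_le ⟨ψ a, ⟨a, haIcc, rfl⟩⟩ ?_
      rintro s ⟨t, htmem, rfl⟩
      exact hest t htmem
    have hS2 : S ≤ 2 * (M + K * M) := by
      rw [hRdef] at hSle
      linarith
    have hψx : ψ x ≤ S := le_csSup hbdd ⟨x, ⟨le_refl x, hxa⟩, rfl⟩
    calc σ x = ψ x * (1 + max 0 (-x)) := hψσ x
      _ ≤ S * (1 + max 0 (-x)) := mul_le_mul_of_nonneg_right hψx (hden x).le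
      _ ≤ (2 * (M + K * M)) * (1 + max 0 (-x)) :=
          mul_le_mul_of_nonneg_right hS2 (hden x).le
  -- conclude
  refine ⟨2 * (M + K * M) + K + 1, by nlinarith [mul_nonneg hK0 hM0], fun x => ?_⟩
  rw [hp0 x]
  have h1mx : (1:ℝ) ≤ 1 + max 0 (-x) := by
    have := le_max_left (0:ℝ) (-x); linarith
  have hc0 : (0:ℝ) ≤ 2 * (M + K * M) := by nlinarith [mul_nonneg hK0 hM0]
  rcases le_total x a with hxa | hax
  · have h := hmain x hxa
    nlinarith [h, hK0, hden x]
  · have h := hKbd x hax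
    nlinarith [h, hK0, hden x, mul_nonneg hc0 (by linarith : (0:ℝ) ≤ max 0 (-x))]
end

section
/- Let V : ℝ → ℝ with ∫(1+|x|)²|V(x)|dx < ∞, and let B_+ satisfy the Marchenko equation and bound as above. Then there is a constant c depending only on ∫(1+|x|)²|V(x)|dx such that for all x ∈ ℝ, ∫_0^∞ y |B_+(x,y)| dy ≤ c(1 + max(0, −x))². -/
open MeasureTheory intervalIntegral

namespace MarchenkoAux

open MeasureTheory Set Filter
open scoped ENNReal NNReal


lemma setLIntegral_mono_pt {α : Type*} [MeasurableSpace α] {μ : Measure α} {s : Set α}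
    (hs : MeasurableSet s) {f g : α → ℝ≥0∞} (h : ∀ t ∈ s, f t ≤ g t) :
    ∫⁻ t in s, f t ∂μ ≤ ∫⁻ t in s, g t ∂μ :=
  lintegral_mono_ae ((ae_restrict_iff' hs).mpr (Filter.Eventually.of_forall h))

lemma key_ineq {x t : ℝ} (hxt : x ≤ t) :
    (t - x) * (1 + (t - x)) * (1 + max 0 (-t)) ^ 2
      ≤ 2 * ((1 + |t|) ^ 2 * (1 + max 0 (-x)) ^ 2) := by
  have hb0 : 0 ≤ max 0 (-x) := le_max_left _ _
  have hbx : -x ≤ max 0 (-x) := le_max_right _ _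
  have hd0 : 0 ≤ t - x := by linarith
  rcases le_total 0 t with ht | ht
  · have ha : max 0 (-t) = 0 := max_eq_left (by linarith)
    have habs : |t| = t := abs_of_nonneg ht
    rw [ha, habs]
    have h1 : t - x ≤ (1 + t) * (1 + max 0 (-x)) := by nlinarith
    have h2 : (1:ℝ) ≤ (1 + t) * (1 + max 0 (-x)) := by nlinarith
    nlinarith [mul_self_le_mul_self hd0 h1]
  · have ha : max 0 (-t) = -t := max_eq_right (by linarith)
    have habs : |t| = -t := abs_of_nonpos ht
    have hxb : max 0 (-x) = -x := max_eq_right (by linarith)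
    rw [ha, habs, hxb]
    have hdb : t - x ≤ -x := by linarith
    have hA : (t - x) * (1 + (t - x)) ≤ 2 * (1 + -x) ^ 2 := by
      nlinarith [mul_self_le_mul_self hd0 hdb]
    have hC : (0:ℝ) ≤ (1 + -t) ^ 2 := sq_nonneg _
    nlinarith [mul_le_mul_of_nonneg_right hA hC]

lemma key_ineq' {x t : ℝ} (hxt : x ≤ t) :
    (t - x) * (1 + (t - x)) ≤ 2 * ((1 + |t|) ^ 2 * (1 + max 0 (-x)) ^ 2) := by
  have h := key_ineq hxt
  have h1 : (1:ℝ) ≤ (1 + max 0 (-t)) ^ 2 := by nlinarith [le_max_left (0:ℝ) (-t)]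
  have hm0 : 0 ≤ (t - x) * (1 + (t - x)) := mul_nonneg (by linarith) (by linarith)
  nlinarith [mul_le_mul_of_nonneg_left h1 hm0]



lemma swap2 (x : ℝ) (ν : ℝ → ℝ≥0∞) (hν : Measurable ν) :
    (∫⁻ y in Ioi (0:ℝ), ENNReal.ofReal (1 + y) * ∫⁻ t in Ioi (x + y), ν t)
      ≤ ∫⁻ t in Ioi x, ν t * ENNReal.ofReal ((t - x) * (1 + (t - x))) := by
  classical
  set A : Set (ℝ × ℝ) := {p : ℝ × ℝ | 0 < p.1 ∧ x + p.1 < p.2} with hAdef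
  have hAm : MeasurableSet A := by
    have : A = {p : ℝ × ℝ | 0 < p.1} ∩ {p : ℝ × ℝ | x + p.1 < p.2} := rfl
    rw [this]
    exact (measurableSet_lt measurable_const measurable_fst).inter
      (measurableSet_lt (measurable_const.add measurable_fst) measurable_snd)
  set F : ℝ × ℝ → ℝ≥0∞ :=
    A.indicator (fun p => ENNReal.ofReal (1 + p.1) * ν p.2) with hFdef
  have hFm : Measurable F :=
    Measurable.indicator
      ((ENNReal.measurable_ofReal.comp (measurable_const.add measurable_fst)).mul
        (hν.comp measurable_snd)) hAm
  have h1 : (∫⁻ y in Ioi (0:ℝ), ENNReal.ofReal (1 + y) * ∫⁻ t in Ioi (x + y), ν t)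
      = ∫⁻ y, ∫⁻ t, F (y, t) := by
    rw [← lintegral_indicator measurableSet_Ioi]
    refine lintegral_congr fun y => ?_
    by_cases hy : y ∈ Ioi (0:ℝ)
    · rw [indicator_of_mem hy]
      have hEq : ∀ t : ℝ, F (y, t)
          = (Ioi (x + y)).indicator (fun t => ENNReal.ofReal (1 + y) * ν t) t := by
        intro t
        simp only [hFdef]
        by_cases ht : x + y < t
        · rw [indicator_of_mem (show (y, t) ∈ A from ⟨mem_Ioi.mp hy, ht⟩),
            indicator_of_mem (mem_Ioi.mpr ht)]
        · rw [indicator_of_notMem (show (y, t) ∉ A from fun hc => ht hc.2),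
            indicator_of_notMem (by simpa [mem_Ioi] using ht)]
      simp_rw [hEq]
      rw [lintegral_indicator measurableSet_Ioi, lintegral_const_mul' _ _ ENNReal.ofReal_ne_top]
    · rw [indicator_of_notMem hy]
      have hEq : ∀ t : ℝ, F (y, t) = 0 := fun t =>
        indicator_of_notMem (fun hc => hy (mem_Ioi.mpr hc.1)) _
      simp only [hEq, lintegral_zero]
  have h2 : (∫⁻ y, ∫⁻ t, F (y, t)) = ∫⁻ t, ∫⁻ y, F (y, t) :=
    lintegral_lintegral_swap hFm.aemeasurable
  have h3 : ∀ t : ℝ, (∫⁻ y, F (y, t))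
      ≤ (Ioi x).indicator (fun t => ν t * ENNReal.ofReal ((t - x) * (1 + (t - x)))) t := by
    intro t
    have hEq : ∀ y : ℝ, F (y, t)
        = ν t * ((Ioo 0 (t - x)).indicator (fun y => ENNReal.ofReal (1 + y)) y) := by
      intro y
      simp only [hFdef]
      by_cases h : 0 < y ∧ x + y < t
      · rw [indicator_of_mem (show (y, t) ∈ A from h),
          indicator_of_mem (mem_Ioo.mpr ⟨h.1, by linarith [h.2]⟩), mul_comm]
      · rw [indicator_of_notMem (show (y, t) ∉ A from h),
          indicator_of_notMem
            (fun hc => h ⟨(mem_Ioo.mp hc).1, by linarith [(mem_Ioo.mp hc).2]⟩), mul_zero]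
    simp_rw [hEq]
    have hmInd : Measurable ((Ioo (0:ℝ) (t - x)).indicator (fun y => ENNReal.ofReal (1 + y))) :=
      Measurable.indicator (by fun_prop) measurableSet_Ioo
    rw [lintegral_const_mul _ hmInd]
    by_cases hxt : x < t
    · rw [indicator_of_mem (mem_Ioi.mpr hxt)]
      refine mul_le_mul_right ?_ (ν t)
      rw [lintegral_indicator measurableSet_Ioo]
      have hb : ∀ y ∈ Ioo (0:ℝ) (t - x),
          ENNReal.ofReal (1 + y) ≤ ENNReal.ofReal (1 + (t - x)) := fun y hy =>
        ENNReal.ofReal_le_ofReal (by linarith [(mem_Ioo.mp hy).2])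
      calc (∫⁻ y in Ioo (0:ℝ) (t - x), ENNReal.ofReal (1 + y))
          ≤ ∫⁻ _ in Ioo (0:ℝ) (t - x), ENNReal.ofReal (1 + (t - x)) :=
            setLIntegral_mono_pt measurableSet_Ioo hb
        _ = ENNReal.ofReal (1 + (t - x)) * volume (Ioo (0:ℝ) (t - x)) :=
            setLIntegral_const _ _
        _ = ENNReal.ofReal ((t - x) * (1 + (t - x))) := by
            rw [Real.volume_Ioo, sub_zero, ← ENNReal.ofReal_mul (by linarith)]
            congr 1; ring
    · have hEmpty : Ioo (0:ℝ) (t - x) = ∅ := Ioo_eq_empty (by simp; linarith)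
      rw [hEmpty]
      simp
  calc (∫⁻ y in Ioi (0:ℝ), ENNReal.ofReal (1 + y) * ∫⁻ t in Ioi (x + y), ν t)
      = ∫⁻ y, ∫⁻ t, F (y, t) := h1
    _ = ∫⁻ t, ∫⁻ y, F (y, t) := h2
    _ ≤ ∫⁻ t, (Ioi x).indicator
          (fun t => ν t * ENNReal.ofReal ((t - x) * (1 + (t - x)))) t := lintegral_mono h3
    _ = _ := lintegral_indicator measurableSet_Ioi _



lemma swap3 (x : ℝ) (ν : ℝ → ℝ≥0∞) (hν : Measurable ν)
    (G : ℝ × ℝ → ℝ≥0∞) (hG : Measurable G) :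
    (∫⁻ y in Ioi (0:ℝ), ENNReal.ofReal (1 + y) *
        ∫⁻ z in Ioc (0:ℝ) y, ∫⁻ t in Ioi (x + y - z), ν t * G (t, z))
      ≤ ∫⁻ t in Ioi x, ν t * ENNReal.ofReal ((t - x) * (1 + (t - x))) *
          ∫⁻ z in Ioi (0:ℝ), ENNReal.ofReal (1 + z) * G (t, z) := by
  classical
  set P : Set (ℝ × ℝ × ℝ) := {p | 0 < p.2.1 ∧ p.2.1 ≤ p.1 ∧ x + p.1 - p.2.1 < p.2.2} with hPdef
  have hPm : MeasurableSet P := by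
    have : P = {p : ℝ × ℝ × ℝ | 0 < p.2.1} ∩
        ({p : ℝ × ℝ × ℝ | p.2.1 ≤ p.1} ∩ {p : ℝ × ℝ × ℝ | x + p.1 - p.2.1 < p.2.2}) := rfl
    rw [this]
    exact (measurableSet_lt measurable_const measurable_snd.fst).inter
      ((measurableSet_le measurable_snd.fst measurable_fst).inter
        (measurableSet_lt ((measurable_const.add measurable_fst).sub measurable_snd.fst)
          measurable_snd.snd))
  set F : ℝ × ℝ × ℝ → ℝ≥0∞ :=
    P.indicator (fun p => ENNReal.ofReal (1 + p.1) * (ν p.2.2 * G (p.2.2, p.2.1))) with hFdef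
  have hFm : Measurable F :=
    Measurable.indicator
      ((ENNReal.measurable_ofReal.comp (measurable_const.add measurable_fst)).mul
        ((hν.comp measurable_snd.snd).mul
          (hG.comp (measurable_snd.snd.prodMk measurable_snd.fst)))) hPm
  -- Step 1 : LHS as unrestricted triple integral
  have h1 : (∫⁻ y in Ioi (0:ℝ), ENNReal.ofReal (1 + y) *
        ∫⁻ z in Ioc (0:ℝ) y, ∫⁻ t in Ioi (x + y - z), ν t * G (t, z))
      = ∫⁻ y, ∫⁻ z, ∫⁻ t, F (y, z, t) := by
    rw [← lintegral_indicator measurableSet_Ioi]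
    refine lintegral_congr fun y => ?_
    by_cases hy : y ∈ Ioi (0:ℝ)
    · rw [indicator_of_mem hy,
        ← lintegral_indicator measurableSet_Ioc, ← lintegral_const_mul' _ _ ENNReal.ofReal_ne_top]
      refine lintegral_congr fun z => ?_
      by_cases hz : z ∈ Ioc (0:ℝ) y
      · rw [indicator_of_mem hz]
        have hEq : ∀ t : ℝ, F (y, z, t)
            = (Ioi (x + y - z)).indicator
                (fun t => ENNReal.ofReal (1 + y) * (ν t * G (t, z))) t := by
          intro t
          simp only [hFdef]
          by_cases ht : x + y - z < t
          · rw [indicator_of_mem (show (y, z, t) ∈ P from ⟨hz.1, hz.2, ht⟩),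
              indicator_of_mem (mem_Ioi.mpr ht)]
          · rw [indicator_of_notMem (show (y, z, t) ∉ P from fun hc => ht hc.2.2),
              indicator_of_notMem (by simpa [mem_Ioi] using ht)]
        simp_rw [hEq]
        rw [lintegral_indicator measurableSet_Ioi,
          lintegral_const_mul' _ _ ENNReal.ofReal_ne_top]
      · rw [indicator_of_notMem hz]
        have hEq : ∀ t : ℝ, F (y, z, t) = 0 := by
          intro t
          simp only [hFdef]
          exact indicator_of_notMem (fun hc => hz ⟨hc.1, hc.2.1⟩) _
        simp only [hEq, lintegral_zero, mul_zero]
    · rw [indicator_of_notMem hy]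
      have hEq : ∀ z t : ℝ, F (y, z, t) = 0 := by
        intro z t
        simp only [hFdef]
        refine indicator_of_notMem (fun hc => ?_) _
        exact absurd (lt_of_lt_of_le hc.1 hc.2.1) (by simpa [mem_Ioi] using hy)
      simp only [hEq, lintegral_zero]
  -- swaps
  have hswap1 : (∫⁻ y, ∫⁻ z, ∫⁻ t, F (y, z, t)) = ∫⁻ z, ∫⁻ y, ∫⁻ t, F (y, z, t) := by
    refine lintegral_lintegral_swap ?_
    refine Measurable.aemeasurable ?_
    exact Measurable.lintegral_prod_right'
      (hFm.comp ((measurable_fst.fst).prodMk ((measurable_fst.snd).prodMk measurable_snd)))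
  have hswap2 : ∀ z : ℝ, (∫⁻ y, ∫⁻ t, F (y, z, t)) = ∫⁻ t, ∫⁻ y, F (y, z, t) := by
    intro z
    refine lintegral_lintegral_swap ?_
    exact (hFm.comp (measurable_fst.prodMk (measurable_const.prodMk measurable_snd))).aemeasurable
  -- pointwise bound for the inner y-integral
  set ψ : ℝ → ℝ → ℝ≥0∞ := fun z t =>
    ((Ioi x).indicator (fun t => ν t * ENNReal.ofReal ((t - x) * (1 + (t - x)))) t) *
      ((Ioi (0:ℝ)).indicator (fun z => ENNReal.ofReal (1 + z) * G (t, z)) z) with hψdef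
  have h4 : ∀ z t : ℝ, (∫⁻ y, F (y, z, t)) ≤ ψ z t := by
    intro z t
    by_cases hz : 0 < z
    · by_cases hxt : x < t
      · have hEq : ∀ y : ℝ, F (y, z, t)
            = (ν t * G (t, z)) *
                ((Ico z (z + (t - x))).indicator (fun y => ENNReal.ofReal (1 + y)) y) := by
          intro y
          simp only [hFdef]
          by_cases hy : y ∈ Ico z (z + (t - x))
          · rw [indicator_of_mem hy,
              indicator_of_mem (show (y, z, t) ∈ P from
                ⟨hz, hy.1, by have h2 := hy.2; linarith⟩)]
            ring
          · rw [indicator_of_notMem hy, indicator_of_notMem (show (y, z, t) ∉ P from ?_),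
              mul_zero]
            rintro ⟨-, h1', h2'⟩
            exact hy ⟨h1', by linarith⟩
        simp_rw [hEq]
        have hmInd : Measurable ((Ico z (z + (t - x))).indicator
            (fun y => ENNReal.ofReal (1 + y))) :=
          Measurable.indicator (by fun_prop) measurableSet_Ico
        rw [lintegral_const_mul _ hmInd, lintegral_indicator measurableSet_Ico]
        have hbound : (∫⁻ y in Ico z (z + (t - x)), ENNReal.ofReal (1 + y))
            ≤ ENNReal.ofReal ((t - x) * (1 + (t - x))) * ENNReal.ofReal (1 + z) := by
          have hb : ∀ y ∈ Ico z (z + (t - x)),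
              ENNReal.ofReal (1 + y) ≤ ENNReal.ofReal ((1 + (t - x)) * (1 + z)) := by
            intro y hy
            refine ENNReal.ofReal_le_ofReal ?_
            have h1' := hy.1; have h2' := hy.2
            nlinarith
          calc (∫⁻ y in Ico z (z + (t - x)), ENNReal.ofReal (1 + y))
              ≤ ∫⁻ _ in Ico z (z + (t - x)), ENNReal.ofReal ((1 + (t - x)) * (1 + z)) :=
                setLIntegral_mono_pt measurableSet_Ico hb
            _ = ENNReal.ofReal ((1 + (t - x)) * (1 + z)) * volume (Ico z (z + (t - x))) :=
                setLIntegral_const _ _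
            _ = ENNReal.ofReal ((1 + (t - x)) * (1 + z)) * ENNReal.ofReal (t - x) := by
                rw [Real.volume_Ico]; congr 1; ring
            _ = ENNReal.ofReal ((t - x) * (1 + (t - x))) * ENNReal.ofReal (1 + z) := by
                rw [← ENNReal.ofReal_mul (by nlinarith), ← ENNReal.ofReal_mul (by nlinarith)]
                congr 1; ring
        calc (ν t * G (t, z)) * (∫⁻ y in Ico z (z + (t - x)), ENNReal.ofReal (1 + y))
            ≤ (ν t * G (t, z)) *
                (ENNReal.ofReal ((t - x) * (1 + (t - x))) * ENNReal.ofReal (1 + z)) :=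
              mul_le_mul_right hbound _
          _ = ψ z t := by
              simp only [hψdef]
              rw [indicator_of_mem (mem_Ioi.mpr hxt), indicator_of_mem (mem_Ioi.mpr hz)]
              ring
      · have hEq : ∀ y : ℝ, F (y, z, t) = 0 := by
          intro y
          simp only [hFdef]
          refine indicator_of_notMem (fun hc => ?_) _
          obtain ⟨-, h1', h2'⟩ := hc
          exact hxt (lt_of_le_of_lt (show x ≤ x + y - z by linarith) h2')
        simp only [hEq, lintegral_zero]
        exact zero_le
    · have hEq : ∀ y : ℝ, F (y, z, t) = 0 := by
        intro y
        simp only [hFdef]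
        exact indicator_of_notMem (fun hc => hz hc.1) _
      simp only [hEq, lintegral_zero]
      exact zero_le
  have hψm : Measurable (fun p : ℝ × ℝ => ψ p.1 p.2) := by
    have hrew : (fun p : ℝ × ℝ => ψ p.1 p.2)
        = fun p => ((Ioi x).indicator
              (fun t => ν t * ENNReal.ofReal ((t - x) * (1 + (t - x)))) p.2) *
            (({q : ℝ × ℝ | 0 < q.1}).indicator
              (fun q => ENNReal.ofReal (1 + q.1) * G (q.2, q.1)) p) := by
      funext p
      simp only [hψdef]
      by_cases hp : 0 < p.1
      · rw [indicator_of_mem (show p.1 ∈ Ioi (0:ℝ) from hp),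
          indicator_of_mem (show p ∈ {q : ℝ × ℝ | 0 < q.1} from hp)]
      · rw [indicator_of_notMem (show p.1 ∉ Ioi (0:ℝ) from hp),
          indicator_of_notMem (show p ∉ {q : ℝ × ℝ | 0 < q.1} from hp)]
    rw [hrew]
    refine Measurable.mul ?_ ?_
    · have hm1 : Measurable fun t : ℝ =>
          (Ioi x).indicator (fun t => ν t * ENNReal.ofReal ((t - x) * (1 + (t - x)))) t :=
        Measurable.indicator (hν.mul (by fun_prop)) measurableSet_Ioi
      exact hm1.comp measurable_snd
    · exact Measurable.indicator
        ((ENNReal.measurable_ofReal.comp (measurable_const.add measurable_fst)).mul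
          (hG.comp (measurable_snd.prodMk measurable_fst)))
        (measurableSet_lt measurable_const measurable_fst)
  have hswap3 : (∫⁻ z, ∫⁻ t, ψ z t) = ∫⁻ t, ∫⁻ z, ψ z t :=
    lintegral_lintegral_swap hψm.aemeasurable
  have h5 : ∀ t : ℝ, (∫⁻ z, ψ z t)
      = (Ioi x).indicator (fun t => ν t * ENNReal.ofReal ((t - x) * (1 + (t - x))) *
          ∫⁻ z in Ioi (0:ℝ), ENNReal.ofReal (1 + z) * G (t, z)) t := by
    intro t
    simp only [hψdef]
    have hmz : Measurable ((Ioi (0:ℝ)).indicator (fun z => ENNReal.ofReal (1 + z) * G (t, z))) :=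
      Measurable.indicator
        ((by fun_prop : Measurable fun z : ℝ => ENNReal.ofReal (1 + z)).mul
          (hG.comp (measurable_const.prodMk measurable_id)))
        measurableSet_Ioi
    rw [lintegral_const_mul _ hmz, lintegral_indicator measurableSet_Ioi]
    by_cases hxt : t ∈ Ioi x
    · rw [indicator_of_mem hxt, indicator_of_mem hxt, mul_assoc]
    · rw [indicator_of_notMem hxt, indicator_of_notMem hxt, zero_mul]
  calc (∫⁻ y in Ioi (0:ℝ), ENNReal.ofReal (1 + y) *
        ∫⁻ z in Ioc (0:ℝ) y, ∫⁻ t in Ioi (x + y - z), ν t * G (t, z))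
      = ∫⁻ y, ∫⁻ z, ∫⁻ t, F (y, z, t) := h1
    _ = ∫⁻ z, ∫⁻ y, ∫⁻ t, F (y, z, t) := hswap1
    _ = ∫⁻ z, ∫⁻ t, ∫⁻ y, F (y, z, t) := lintegral_congr fun z => hswap2 z
    _ ≤ ∫⁻ z, ∫⁻ t, ψ z t := lintegral_mono fun z => lintegral_mono fun t => h4 z t
    _ = ∫⁻ t, ∫⁻ z, ψ z t := hswap3
    _ = ∫⁻ t, (Ioi x).indicator (fun t => ν t * ENNReal.ofReal ((t - x) * (1 + (t - x))) *
          ∫⁻ z in Ioi (0:ℝ), ENNReal.ofReal (1 + z) * G (t, z)) t := lintegral_congr h5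
    _ = _ := lintegral_indicator measurableSet_Ioi _



lemma gronwall (E q K : ℝ → ℝ≥0∞) (M : ℝ≥0∞) (hM : M ≠ ∞)
    (hq1 : ∀ x, 1 ≤ q x) (hqtop : ∀ x, q x ≠ ∞)
    (hKm : Measurable K) (hKint : (∫⁻ t, K t) ≠ ∞)
    (hap : ∀ x, ∃ b, b ≠ ∞ ∧ ∀ t, x ≤ t → E t ≤ b)
    (hmaster : ∀ x, E x ≤ q x * (M + ∫⁻ t in Set.Ioi x, K t * (E t / q t))) :
    ∃ C, C ≠ ∞ ∧ ∀ x, E x ≤ C * q x := by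
  have hq0 : ∀ x, q x ≠ 0 := fun x => (lt_of_lt_of_le zero_lt_one (hq1 x)).ne'
  -- choose a point where the tail of K is small
  obtain ⟨a, ha⟩ : ∃ a : ℝ, (∫⁻ t in Iic a, K t) ≤ 2⁻¹ := by
    set μ' := volume.withDensity K with hμ'
    have happly : ∀ b : ℝ, μ' (Iic b) = ∫⁻ t in Iic b, K t := fun b =>
      withDensity_apply _ measurableSet_Iic
    have hmono : Antitone fun n : ℕ => Iic (-(n:ℝ)) := fun m n hmn =>
      Iic_subset_Iic.mpr (neg_le_neg (by exact_mod_cast hmn))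
    have hempty : ⋂ n : ℕ, Iic (-(n:ℝ)) = ∅ := by
      ext r
      simp only [mem_iInter, mem_Iic, mem_empty_iff_false, iff_false, not_forall, not_le]
      obtain ⟨n, hn⟩ := exists_nat_gt (-r)
      exact ⟨n, by linarith⟩
    have hfin : μ' (Iic (-((0:ℕ):ℝ))) ≠ ∞ := by
      rw [happly]
      exact ne_top_of_le_ne_top hKint (setLIntegral_le_lintegral _ _)
    have htend := tendsto_measure_iInter_atTop
      (fun n => measurableSet_Iic.nullMeasurableSet) hmono ⟨0, hfin⟩
    rw [hempty, measure_empty] at htend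
    have hev := htend.eventually_lt_const (show (0:ℝ≥0∞) < 2⁻¹ by norm_num)
    obtain ⟨n, hn⟩ := hev.exists
    refine ⟨-(n:ℝ), ?_⟩
    rw [← happly]
    exact le_of_lt hn
  set S : ℝ → ℝ≥0∞ := fun x => ⨆ (t : ℝ) (_ : x ≤ t), E t / q t with hSdef
  have hSle : ∀ {x t : ℝ}, x ≤ t → E t / q t ≤ S x := by
    intro x t h
    exact le_iSup₂ (f := fun (t : ℝ) (_ : x ≤ t) => E t / q t) t h
  have hSfin : ∀ x, S x ≠ ∞ := by
    intro x
    obtain ⟨b, hb, hEb⟩ := hap x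
    refine ne_top_of_le_ne_top hb (iSup₂_le fun t ht => ?_)
    calc E t / q t ≤ E t / 1 := ENNReal.div_le_div le_rfl (hq1 t)
      _ = E t := by rw [div_one]
      _ ≤ b := hEb t ht
  set M' := ∫⁻ t, K t with hM'def
  have hEq : ∀ x, E x / q x ≤ M + ∫⁻ t in Set.Ioi x, K t * (E t / q t) := by
    intro x
    calc E x / q x ≤ (q x * (M + ∫⁻ t in Set.Ioi x, K t * (E t / q t))) / q x :=
          ENNReal.div_le_div (hmaster x) le_rfl
      _ = M + ∫⁻ t in Set.Ioi x, K t * (E t / q t) := by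
          rw [mul_comm, mul_div_assoc, ENNReal.div_self (hq0 x) (hqtop x), mul_one]
  have hkey : ∀ x₀, S x₀ ≤ (M + S a * M') + 2⁻¹ * S x₀ := by
    intro x₀
    refine iSup₂_le fun x hx => ?_
    refine le_trans (hEq x) ?_
    have hsplit : (∫⁻ t in Set.Ioi x, K t * (E t / q t))
        ≤ ∫⁻ t in Set.Ioi x,
            ((Iic a).indicator (fun t => K t * S x₀) t
              + (Ioi a).indicator (fun t => K t * S a) t) := by
      refine setLIntegral_mono_pt measurableSet_Ioi fun t ht => ?_
      rcases le_or_gt t a with hta | hta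
      · rw [indicator_of_mem (mem_Iic.mpr hta),
          indicator_of_notMem (by simpa [mem_Ioi] using not_lt.mpr hta), add_zero]
        exact mul_le_mul_right (hSle (le_trans hx (le_of_lt (mem_Ioi.mp ht)))) _
      · rw [indicator_of_notMem (by simpa [mem_Iic] using not_le.mpr hta),
          indicator_of_mem (mem_Ioi.mpr hta), zero_add]
        exact mul_le_mul_right (hSle hta.le) _
    have hadd : (∫⁻ t in Set.Ioi x,
            ((Iic a).indicator (fun t => K t * S x₀) t
              + (Ioi a).indicator (fun t => K t * S a) t))
        = (∫⁻ t in Set.Ioi x, (Iic a).indicator (fun t => K t * S x₀) t)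
          + ∫⁻ t in Set.Ioi x, (Ioi a).indicator (fun t => K t * S a) t :=
      lintegral_add_left ((hKm.mul measurable_const).indicator measurableSet_Iic) _
    have h1 : (∫⁻ t in Set.Ioi x, (Iic a).indicator (fun t => K t * S x₀) t)
        ≤ 2⁻¹ * S x₀ := by
      calc (∫⁻ t in Set.Ioi x, (Iic a).indicator (fun t => K t * S x₀) t)
          ≤ ∫⁻ t, (Iic a).indicator (fun t => K t * S x₀) t := setLIntegral_le_lintegral _ _
        _ = ∫⁻ t in Iic a, K t * S x₀ := lintegral_indicator measurableSet_Iic _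
        _ = (∫⁻ t in Iic a, K t) * S x₀ := lintegral_mul_const _ hKm
        _ ≤ 2⁻¹ * S x₀ := mul_le_mul_left ha _
    have h2 : (∫⁻ t in Set.Ioi x, (Ioi a).indicator (fun t => K t * S a) t)
        ≤ S a * M' := by
      calc (∫⁻ t in Set.Ioi x, (Ioi a).indicator (fun t => K t * S a) t)
          ≤ ∫⁻ t, (Ioi a).indicator (fun t => K t * S a) t := setLIntegral_le_lintegral _ _
        _ = ∫⁻ t in Ioi a, K t * S a := lintegral_indicator measurableSet_Ioi _
        _ = (∫⁻ t in Ioi a, K t) * S a := lintegral_mul_const _ hKm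
        _ ≤ M' * S a := mul_le_mul_left (setLIntegral_le_lintegral _ _) _
        _ = S a * M' := mul_comm _ _
    calc M + ∫⁻ t in Set.Ioi x, K t * (E t / q t)
        ≤ M + ((∫⁻ t in Set.Ioi x, (Iic a).indicator (fun t => K t * S x₀) t)
            + ∫⁻ t in Set.Ioi x, (Ioi a).indicator (fun t => K t * S a) t) :=
          add_le_add_right (le_trans hsplit (le_of_eq hadd)) M
      _ ≤ M + (2⁻¹ * S x₀ + S a * M') := add_le_add_right (add_le_add h1 h2) M
      _ = (M + S a * M') + 2⁻¹ * S x₀ := by ring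
  set D := M + S a * M' with hDdef
  have hDfin : D ≠ ∞ :=
    ENNReal.add_ne_top.mpr ⟨hM, ENNReal.mul_ne_top (hSfin a) hKint⟩
  have hS2 : ∀ x, S x ≤ 2 * D := by
    intro x
    have h := hkey x
    have hfin := hSfin x
    have h2 : 2 * S x ≤ 2 * (D + 2⁻¹ * S x) := mul_le_mul_right h 2
    rw [mul_add, ← mul_assoc,
      ENNReal.mul_inv_cancel (by norm_num : (2:ℝ≥0∞) ≠ 0) (by norm_num : (2:ℝ≥0∞) ≠ ∞),
      one_mul] at h2
    have h3 : S x + S x ≤ 2 * D + S x := by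
      calc S x + S x = 2 * S x := (two_mul _).symm
        _ ≤ 2 * D + S x := h2
    have h4 : S x ≤ 2 * D := (ENNReal.add_le_add_iff_right hfin).mp h3
    exact h4
  refine ⟨2 * D, ENNReal.mul_ne_top (by norm_num) hDfin, fun x => ?_⟩
  calc E x = E x / q x * q x := (ENNReal.div_mul_cancel (hq0 x) (hqtop x)).symm
    _ ≤ 2 * D * q x := mul_le_mul_left (le_trans (hSle le_rfl) (hS2 x)) _


end MarchenkoAux

open MarchenkoAux

open MeasureTheory Set Filter ENNReal NNReal in
/-- Weighted `L¹` bound for the Marchenko kernel `B₊` with weight `y`: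
if `∫(1+|x|)²|V| < ∞` then `∫_0^∞ y|B₊(x,y)| dy ≤ c(1 + max(0,−x))²`. -/
theorem marchenko_kernel_weighted_L1 (V : ℝ → ℝ) (B : ℝ → ℝ → ℝ)
    (hV : Integrable (fun x => (1 + |x|) ^ 2 * |V x|))
    (hB_meas : Measurable (Function.uncurry B))
    (hB_supp : ∀ x : ℝ, ∀ y < (0 : ℝ), B x y = 0)
    (hB_eq : ∀ x : ℝ, ∀ y : ℝ, 0 ≤ y →
      B x y = (∫ t in Set.Ioi (x + y), V t) +
        ∫ z in (0 : ℝ)..y, ∫ t in Set.Ioi (x + y - z), V t * B t z)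
    (hB_bd : ∀ x y : ℝ, |B x y| ≤
      Real.exp (∫ t in Set.Ioi x, (t - x) * |V t|) * ∫ t in Set.Ioi (x + y), |V t|) :
    ∃ c > (0 : ℝ), ∀ x : ℝ,
      (∫ y in Set.Ioi (0 : ℝ), y * |B x y|) ≤ c * (1 + max 0 (-x)) ^ 2 := by
  classical
  -- measurability of |V|
  have hVsm : AEStronglyMeasurable (fun t : ℝ => |V t|) volume := by
    have h2 : Continuous fun t : ℝ => ((1 + |t|) ^ 2)⁻¹ :=
      Continuous.inv₀ ((continuous_const.add continuous_abs).pow 2) (fun t => by positivity)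
    have h3 : (fun t : ℝ => |V t|) = fun t => ((1 + |t|) ^ 2)⁻¹ * ((1 + |t|) ^ 2 * |V t|) := by
      funext t
      have : (1 + |t|) ^ 2 ≠ 0 := by positivity
      field_simp
    rw [h3]
    exact h2.aestronglyMeasurable.mul hV.aestronglyMeasurable
  have habs_int : Integrable (fun t : ℝ => |V t|) := by
    refine hV.mono' hVsm (Filter.Eventually.of_forall fun t => ?_)
    rw [Real.norm_eq_abs, abs_abs]
    have h1 : (1:ℝ) ≤ (1 + |t|) ^ 2 := by nlinarith [abs_nonneg t]
    nlinarith [mul_le_mul_of_nonneg_right h1 (abs_nonneg (V t))]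
  -- a measurable representative of ofReal |V|
  have hνam : AEMeasurable (fun t : ℝ => ENNReal.ofReal |V t|) volume :=
    ENNReal.measurable_ofReal.comp_aemeasurable hVsm.aemeasurable
  set ν₀ : ℝ → ℝ≥0∞ := hνam.mk _ with hν₀def
  have hν₀m : Measurable ν₀ := hνam.measurable_mk
  have hνae : (fun t : ℝ => ENNReal.ofReal |V t|) =ᵐ[volume] ν₀ := hνam.ae_eq_mk
  -- tail integral of |V|
  set Φ : ℝ → ℝ≥0∞ := fun u => ∫⁻ t in Ioi u, ν₀ t with hΦdef
  have hφ : ∀ u : ℝ, ENNReal.ofReal (∫ t in Set.Ioi u, |V t|) = Φ u := by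
    intro u
    rw [ofReal_integral_eq_lintegral_ofReal habs_int.integrableOn
      (Filter.Eventually.of_forall fun t => abs_nonneg _)]
    exact lintegral_congr_ae (ae_restrict_of_ae hνae)
  have hΦ_anti : Antitone Φ := fun u v huv =>
    lintegral_mono_set (Ioi_subset_Ioi huv)
  have hΦm : Measurable Φ := by
    have h : Φ = fun u => ∫⁻ t, ({p : ℝ × ℝ | p.1 < p.2}).indicator (fun p => ν₀ p.2) (u, t) := by
      funext u
      show (∫⁻ t in Ioi u, ν₀ t) = _
      rw [← lintegral_indicator measurableSet_Ioi]
      refine lintegral_congr fun t => ?_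
      by_cases h : u < t
      · rw [indicator_of_mem (mem_Ioi.mpr h),
          indicator_of_mem (show ((u, t) : ℝ × ℝ) ∈ {p : ℝ × ℝ | p.1 < p.2} from h)]
      · rw [indicator_of_notMem (by simpa [mem_Ioi] using h),
          indicator_of_notMem (show ((u, t) : ℝ × ℝ) ∉ {p : ℝ × ℝ | p.1 < p.2} from h)]
    rw [h]
    exact Measurable.lintegral_prod_right'
      (Measurable.indicator (hν₀m.comp measurable_snd)
        (measurableSet_lt measurable_fst measurable_snd))
  -- the ENNReal kernel
  set 𝔅 : ℝ × ℝ → ℝ≥0∞ := fun p => ENNReal.ofReal |Function.uncurry B p| with h𝔅def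
  have h𝔅m : Measurable 𝔅 := hB_meas.abs.ennreal_ofReal
  -- gamma
  set γ : ℝ → ℝ := fun x => ∫ t in Set.Ioi x, (t - x) * |V t| with hγdef
  have hγ_int : ∀ x : ℝ, IntegrableOn (fun s => (s - x) * |V s|) (Ioi x) := by
    intro x
    refine Integrable.mono' ((hV.const_mul (1 + |x|)).integrableOn)
      (((continuous_id.sub continuous_const).aestronglyMeasurable.mul hVsm).restrict)
      (ae_restrict_of_ae (Filter.Eventually.of_forall fun s => ?_))
    rw [Real.norm_eq_abs, abs_mul, abs_abs]
    have h1 : |s - x| ≤ (1 + |x|) * (1 + |s|) ^ 2 := by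
      have := abs_sub s x
      nlinarith [abs_nonneg s, abs_nonneg x, abs_sub_abs_le_abs_sub s x, abs_sub s x,
        sq_nonneg (|s|), abs_nonneg (s - x)]
    nlinarith [abs_nonneg (V s), abs_nonneg (s - x)]
  have hγ_anti : Antitone γ := by
    intro u v huv
    have hint_v : IntegrableOn (fun s => (s - v) * |V s|) (Ioi v) := hγ_int v
    have hint_u' : IntegrableOn (fun s => (s - u) * |V s|) (Ioi v) :=
      (hγ_int u).mono_set (Ioi_subset_Ioi huv)
    have h1 : γ v ≤ ∫ s in Ioi v, (s - u) * |V s| := by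
      refine setIntegral_mono_on hint_v hint_u' measurableSet_Ioi fun s hs => ?_
      exact mul_le_mul_of_nonneg_right (by linarith) (abs_nonneg _)
    have h2 : (∫ s in Ioi v, (s - u) * |V s|) ≤ γ u := by
      refine setIntegral_mono_set (hγ_int u)
        ((ae_restrict_iff' measurableSet_Ioi).mpr (Filter.Eventually.of_forall fun s hs =>
          mul_nonneg (by linarith [mem_Ioi.mp hs]) (abs_nonneg _)))
        (HasSubset.Subset.eventuallyLE (Ioi_subset_Ioi huv))
    linarith
  -- Step A : pointwise bound from the integral equation
  have hA : ∀ x y : ℝ, 0 < y →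
      𝔅 (x, y) ≤ Φ (x + y) +
        ∫⁻ z in Ioc (0:ℝ) y, ∫⁻ t in Ioi (x + y - z), ν₀ t * 𝔅 (t, z) := by
    intro x y hy
    have h0 : 𝔅 (x, y) = ENNReal.ofReal |B x y| := rfl
    rw [h0, hB_eq x y hy.le]
    refine le_trans (ENNReal.ofReal_le_ofReal (abs_add_le _ _)) ?_
    rw [ENNReal.ofReal_add (abs_nonneg _) (abs_nonneg _)]
    have hfirst : ENNReal.ofReal |∫ t in Set.Ioi (x + y), V t| ≤ Φ (x + y) := by
      calc ENNReal.ofReal |∫ t in Set.Ioi (x + y), V t|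
          = (‖∫ t in Set.Ioi (x + y), V t‖₊ : ℝ≥0∞) := (Real.enorm_eq_ofReal_abs _).symm
        _ ≤ ∫⁻ t in Set.Ioi (x + y), (‖V t‖₊ : ℝ≥0∞) := enorm_integral_le_lintegral_enorm _
        _ = Φ (x + y) := by
            refine lintegral_congr_ae (ae_restrict_of_ae (hνae.mono fun t ht => ?_))
            show (‖V t‖₊ : ℝ≥0∞) = ν₀ t
            rw [← enorm_eq_nnnorm, Real.enorm_eq_ofReal_abs]
            exact ht
    have hsecond : ENNReal.ofReal |∫ z in (0:ℝ)..y, ∫ t in Set.Ioi (x + y - z), V t * B t z|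
        ≤ ∫⁻ z in Ioc (0:ℝ) y, ∫⁻ t in Ioi (x + y - z), ν₀ t * 𝔅 (t, z) := by
      rw [intervalIntegral.integral_of_le hy.le]
      calc ENNReal.ofReal |∫ z in Ioc (0:ℝ) y, ∫ t in Set.Ioi (x + y - z), V t * B t z|
          = (‖∫ z in Ioc (0:ℝ) y, ∫ t in Set.Ioi (x + y - z), V t * B t z‖₊ : ℝ≥0∞) :=
            (Real.enorm_eq_ofReal_abs _).symm
        _ ≤ ∫⁻ z in Ioc (0:ℝ) y, (‖∫ t in Set.Ioi (x + y - z), V t * B t z‖₊ : ℝ≥0∞) :=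
            enorm_integral_le_lintegral_enorm _
        _ ≤ ∫⁻ z in Ioc (0:ℝ) y, ∫⁻ t in Ioi (x + y - z), ν₀ t * 𝔅 (t, z) := by
            refine lintegral_mono fun z => ?_
            calc (‖∫ t in Set.Ioi (x + y - z), V t * B t z‖₊ : ℝ≥0∞)
                ≤ ∫⁻ t in Set.Ioi (x + y - z), (‖V t * B t z‖₊ : ℝ≥0∞) :=
                  enorm_integral_le_lintegral_enorm _
              _ = ∫⁻ t in Ioi (x + y - z), ν₀ t * 𝔅 (t, z) := by
                  refine lintegral_congr_ae (ae_restrict_of_ae (hνae.mono fun t ht => ?_))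
                  show (‖V t * B t z‖₊ : ℝ≥0∞) = ν₀ t * 𝔅 (t, z)
                  rw [nnnorm_mul, ENNReal.coe_mul, ← enorm_eq_nnnorm, Real.enorm_eq_ofReal_abs,
                    ← enorm_eq_nnnorm, Real.enorm_eq_ofReal_abs]
                  rw [← ht]
                  rfl
    exact add_le_add hfirst hsecond
  -- the weighted integral
  set Edef : ℝ → ℝ≥0∞ := fun x => ∫⁻ y in Ioi (0:ℝ), ENNReal.ofReal (1 + y) * 𝔅 (x, y)
    with hEdef
  -- the integrable comparison kernel
  set k : ℝ → ℝ≥0∞ := fun t => ν₀ t * ENNReal.ofReal ((1 + |t|) ^ 2) with hkdef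
  have hkm : Measurable k := hν₀m.mul (by fun_prop)
  have hkint : (∫⁻ t, k t) = ENNReal.ofReal (∫ t, (1 + |t|) ^ 2 * |V t|) := by
    rw [ofReal_integral_eq_lintegral_ofReal hV
      (Filter.Eventually.of_forall fun t => by positivity)]
    refine lintegral_congr_ae (hνae.mono fun t ht => ?_)
    rw [hkdef]
    dsimp only
    rw [← ht, ← ENNReal.ofReal_mul (abs_nonneg _)]
    congr 1
    ring
  set Mtot := ∫⁻ t, k t with hMtotdef
  have hMtot : Mtot ≠ ∞ := by rw [hkint]; exact ENNReal.ofReal_ne_top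
  set K : ℝ → ℝ≥0∞ := fun t => 2 * k t with hKdef
  have hKm : Measurable K := measurable_const.mul hkm
  have hKint : (∫⁻ t, K t) ≠ ∞ := by
    rw [show (∫⁻ t, K t) = 2 * Mtot from by
      rw [hMtotdef]; exact lintegral_const_mul 2 hkm]
    exact ENNReal.mul_ne_top (by norm_num) hMtot
  -- the weight q
  set q : ℝ → ℝ≥0∞ := fun x => ENNReal.ofReal ((1 + max 0 (-x)) ^ 2) with hqdef
  have hq1 : ∀ x, 1 ≤ q x := by
    intro x
    rw [hqdef]
    dsimp only
    rw [show (1 : ℝ≥0∞) = ENNReal.ofReal 1 from (ENNReal.ofReal_one).symm]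
    exact ENNReal.ofReal_le_ofReal (by nlinarith [le_max_left (0:ℝ) (-x)])
  have hqtop : ∀ x, q x ≠ ∞ := fun x => ENNReal.ofReal_ne_top
  have hq_anti : ∀ {u v : ℝ}, u ≤ v → q v ≤ q u := by
    intro u v huv
    refine ENNReal.ofReal_le_ofReal ?_
    have h1 : max 0 (-v) ≤ max 0 (-u) := max_le_max le_rfl (by linarith)
    nlinarith [le_max_left (0:ℝ) (-v)]
  -- the first term estimate
  set L1 : ℝ → ℝ≥0∞ := fun x => ∫⁻ y in Ioi (0:ℝ), ENNReal.ofReal (1 + y) * Φ (x + y)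
    with hL1def
  have hL1 : ∀ x, L1 x ≤ q x * (2 * Mtot) := by
    intro x
    refine le_trans (swap2 x ν₀ hν₀m) ?_
    have hpt : ∀ t ∈ Ioi x, ν₀ t * ENNReal.ofReal ((t - x) * (1 + (t - x)))
        ≤ q x * K t := by
      intro t ht
      have hxt : x ≤ t := (mem_Ioi.mp ht).le
      have h1 : ENNReal.ofReal ((t - x) * (1 + (t - x)))
          ≤ q x * (2 * ENNReal.ofReal ((1 + |t|) ^ 2)) := by
        rw [hqdef]
        dsimp only
        rw [show (2:ℝ≥0∞) = ENNReal.ofReal 2 from (ENNReal.ofReal_ofNat 2).symm,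
          ← ENNReal.ofReal_mul (by norm_num), ← ENNReal.ofReal_mul (by positivity)]
        refine ENNReal.ofReal_le_ofReal ?_
        have := key_ineq' hxt
        nlinarith [this]
      calc ν₀ t * ENNReal.ofReal ((t - x) * (1 + (t - x)))
          ≤ ν₀ t * (q x * (2 * ENNReal.ofReal ((1 + |t|) ^ 2))) := mul_le_mul_right h1 _
        _ = q x * K t := by rw [hKdef, hkdef]; dsimp only; ring
    calc (∫⁻ t in Ioi x, ν₀ t * ENNReal.ofReal ((t - x) * (1 + (t - x))))
        ≤ ∫⁻ t in Ioi x, q x * K t := setLIntegral_mono_pt measurableSet_Ioi hpt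
      _ = q x * ∫⁻ t in Ioi x, K t := lintegral_const_mul' _ _ (hqtop x)
      _ ≤ q x * ∫⁻ t, K t := mul_le_mul_right (setLIntegral_le_lintegral _ _) _
      _ = q x * (2 * Mtot) := by
          rw [show (∫⁻ t, K t) = 2 * Mtot from by
            rw [hMtotdef]; exact lintegral_const_mul 2 hkm]
  -- master inequality
  have hmaster : ∀ x, Edef x ≤ q x * (2 * Mtot + ∫⁻ t in Set.Ioi x, K t * (Edef t / q t)) := by
    intro x
    have hstep : Edef x ≤ L1 x +
        ∫⁻ y in Ioi (0:ℝ), ENNReal.ofReal (1 + y) *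
          ∫⁻ z in Ioc (0:ℝ) y, ∫⁻ t in Ioi (x + y - z), ν₀ t * 𝔅 (t, z) := by
      have hmono : Edef x ≤ ∫⁻ y in Ioi (0:ℝ),
          (ENNReal.ofReal (1 + y) * Φ (x + y) +
            ENNReal.ofReal (1 + y) *
              ∫⁻ z in Ioc (0:ℝ) y, ∫⁻ t in Ioi (x + y - z), ν₀ t * 𝔅 (t, z)) := by
        rw [hEdef]
        refine setLIntegral_mono_pt measurableSet_Ioi fun y hy => ?_
        rw [← mul_add]
        exact mul_le_mul_right (hA x y (mem_Ioi.mp hy)) _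
      refine le_trans hmono (le_of_eq ?_)
      rw [hL1def]
      exact lintegral_add_left ((by fun_prop : Measurable fun y : ℝ =>
        ENNReal.ofReal (1 + y)).mul (hΦm.comp (measurable_const.add measurable_id))) _
    have hT : (∫⁻ y in Ioi (0:ℝ), ENNReal.ofReal (1 + y) *
          ∫⁻ z in Ioc (0:ℝ) y, ∫⁻ t in Ioi (x + y - z), ν₀ t * 𝔅 (t, z))
        ≤ ∫⁻ t in Ioi x, ν₀ t * ENNReal.ofReal ((t - x) * (1 + (t - x))) * Edef t :=
      swap3 x ν₀ hν₀m 𝔅 h𝔅m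
    have hT2 : (∫⁻ t in Ioi x, ν₀ t * ENNReal.ofReal ((t - x) * (1 + (t - x))) * Edef t)
        ≤ q x * ∫⁻ t in Set.Ioi x, K t * (Edef t / q t) := by
      have hpt : ∀ t ∈ Ioi x, ν₀ t * ENNReal.ofReal ((t - x) * (1 + (t - x))) * Edef t
          ≤ q x * (K t * (Edef t / q t)) := by
        intro t ht
        have hxt : x ≤ t := (mem_Ioi.mp ht).le
        have hqt0 : q t ≠ 0 := (lt_of_lt_of_le zero_lt_one (hq1 t)).ne'
        have hEdec : Edef t = Edef t / q t * q t := (ENNReal.div_mul_cancel hqt0 (hqtop t)).symm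
        have hkey2 : ENNReal.ofReal ((t - x) * (1 + (t - x))) * q t
            ≤ q x * (2 * ENNReal.ofReal ((1 + |t|) ^ 2)) := by
          rw [hqdef]
          dsimp only
          rw [show (2:ℝ≥0∞) = ENNReal.ofReal 2 from (ENNReal.ofReal_ofNat 2).symm,
            ← ENNReal.ofReal_mul (mul_nonneg (by linarith : (0:ℝ) ≤ t - x)
              (by linarith : (0:ℝ) ≤ 1 + (t - x))),
            ← ENNReal.ofReal_mul (by norm_num : (0:ℝ) ≤ 2),
            ← ENNReal.ofReal_mul (by positivity)]
          refine ENNReal.ofReal_le_ofReal ?_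
          have := key_ineq hxt
          nlinarith [this]
        calc ν₀ t * ENNReal.ofReal ((t - x) * (1 + (t - x))) * Edef t
            = (ENNReal.ofReal ((t - x) * (1 + (t - x))) * q t) * (ν₀ t * (Edef t / q t)) := by
              conv_lhs => rw [hEdec]
              ring
          _ ≤ (q x * (2 * ENNReal.ofReal ((1 + |t|) ^ 2))) * (ν₀ t * (Edef t / q t)) :=
              mul_le_mul_left hkey2 _
          _ = q x * (K t * (Edef t / q t)) := by rw [hKdef, hkdef]; dsimp only; ring
      calc (∫⁻ t in Ioi x, ν₀ t * ENNReal.ofReal ((t - x) * (1 + (t - x))) * Edef t)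
          ≤ ∫⁻ t in Ioi x, q x * (K t * (Edef t / q t)) :=
            setLIntegral_mono_pt measurableSet_Ioi hpt
        _ = q x * ∫⁻ t in Set.Ioi x, K t * (Edef t / q t) := lintegral_const_mul' _ _ (hqtop x)
    calc Edef x ≤ L1 x + ∫⁻ y in Ioi (0:ℝ), ENNReal.ofReal (1 + y) *
          ∫⁻ z in Ioc (0:ℝ) y, ∫⁻ t in Ioi (x + y - z), ν₀ t * 𝔅 (t, z) := hstep
      _ ≤ q x * (2 * Mtot) + q x * ∫⁻ t in Set.Ioi x, K t * (Edef t / q t) :=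
          add_le_add (hL1 x) (le_trans hT hT2)
      _ = q x * (2 * Mtot + ∫⁻ t in Set.Ioi x, K t * (Edef t / q t)) := (mul_add _ _ _).symm
  -- a priori bound
  have hap : ∀ x₀, ∃ b, b ≠ ∞ ∧ ∀ t, x₀ ≤ t → Edef t ≤ b := by
    intro x₀
    refine ⟨ENNReal.ofReal (Real.exp (γ x₀)) * (q x₀ * (2 * Mtot)),
      ENNReal.mul_ne_top ENNReal.ofReal_ne_top
        (ENNReal.mul_ne_top (hqtop x₀) (ENNReal.mul_ne_top (by norm_num) hMtot)),
      fun t ht => ?_⟩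
    have h1 : Edef t ≤ ENNReal.ofReal (Real.exp (γ t)) * L1 t := by
      have hpt : ∀ y ∈ Ioi (0:ℝ), ENNReal.ofReal (1 + y) * 𝔅 (t, y)
          ≤ ENNReal.ofReal (Real.exp (γ t)) * (ENNReal.ofReal (1 + y) * Φ (t + y)) := by
        intro y hy
        have hBb := hB_bd t y
        have h2 : 𝔅 (t, y) ≤ ENNReal.ofReal (Real.exp (γ t)) * Φ (t + y) := by
          calc 𝔅 (t, y) = ENNReal.ofReal |B t y| := rfl
            _ ≤ ENNReal.ofReal (Real.exp (γ t) * ∫ s in Set.Ioi (t + y), |V s|) :=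
                ENNReal.ofReal_le_ofReal (by rw [hγdef]; exact hBb)
            _ = ENNReal.ofReal (Real.exp (γ t)) * ENNReal.ofReal (∫ s in Set.Ioi (t + y), |V s|) :=
                ENNReal.ofReal_mul (Real.exp_nonneg _)
            _ = ENNReal.ofReal (Real.exp (γ t)) * Φ (t + y) := by rw [hφ (t + y)]
        calc ENNReal.ofReal (1 + y) * 𝔅 (t, y)
            ≤ ENNReal.ofReal (1 + y) * (ENNReal.ofReal (Real.exp (γ t)) * Φ (t + y)) :=
              mul_le_mul_right h2 _
          _ = ENNReal.ofReal (Real.exp (γ t)) * (ENNReal.ofReal (1 + y) * Φ (t + y)) := by ring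
      calc Edef t ≤ ∫⁻ y in Ioi (0:ℝ),
            ENNReal.ofReal (Real.exp (γ t)) * (ENNReal.ofReal (1 + y) * Φ (t + y)) := by
            rw [hEdef]
            exact setLIntegral_mono_pt measurableSet_Ioi hpt
        _ = ENNReal.ofReal (Real.exp (γ t)) * L1 t := by
            rw [hL1def]
            exact lintegral_const_mul' _ _ ENNReal.ofReal_ne_top
    calc Edef t ≤ ENNReal.ofReal (Real.exp (γ t)) * L1 t := h1
      _ ≤ ENNReal.ofReal (Real.exp (γ t)) * (q t * (2 * Mtot)) := mul_le_mul_right (hL1 t) _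
      _ ≤ ENNReal.ofReal (Real.exp (γ x₀)) * (q x₀ * (2 * Mtot)) := by
          refine mul_le_mul' (ENNReal.ofReal_le_ofReal (Real.exp_le_exp.mpr (hγ_anti ht)))
            (mul_le_mul_left (hq_anti ht) _)
  -- Gronwall
  obtain ⟨C, hCfin, hCE⟩ := gronwall Edef q K (2 * Mtot)
    (ENNReal.mul_ne_top (by norm_num) hMtot) hq1 hqtop hKm hKint hap hmaster
  refine ⟨C.toReal + 1, by positivity, fun x => ?_⟩
  have hgoal_meas : AEStronglyMeasurable (fun y => y * |B x y|) (volume.restrict (Ioi (0:ℝ))) := by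
    refine Measurable.aestronglyMeasurable ?_
    exact measurable_id.mul ((hB_meas.comp measurable_prodMk_left).abs)
  have hnn : 0 ≤ᵐ[volume.restrict (Ioi (0:ℝ))] fun y => y * |B x y| :=
    (ae_restrict_iff' measurableSet_Ioi).mpr (Filter.Eventually.of_forall fun y hy =>
      mul_nonneg (le_of_lt (mem_Ioi.mp hy)) (abs_nonneg _))
  rw [integral_eq_lintegral_of_nonneg_ae hnn hgoal_meas]
  have hle : (∫⁻ y in Ioi (0:ℝ), ENNReal.ofReal (y * |B x y|)) ≤ C * q x := by
    refine le_trans ?_ (hCE x)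
    rw [hEdef]
    refine setLIntegral_mono_pt measurableSet_Ioi fun y hy => ?_
    rw [ENNReal.ofReal_mul (le_of_lt (mem_Ioi.mp hy))]
    exact mul_le_mul_left (ENNReal.ofReal_le_ofReal (by linarith [mem_Ioi.mp hy])) _
  calc (∫⁻ y in Ioi (0:ℝ), ENNReal.ofReal (y * |B x y|)).toReal
      ≤ (C * q x).toReal :=
        ENNReal.toReal_mono (ENNReal.mul_ne_top hCfin (hqtop x)) hle
    _ = C.toReal * (1 + max 0 (-x)) ^ 2 := by
        rw [ENNReal.toReal_mul, hqdef]
        dsimp only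
        rw [ENNReal.toReal_ofReal (by positivity)]
    _ ≤ (C.toReal + 1) * (1 + max 0 (-x)) ^ 2 := by
        refine mul_le_mul_of_nonneg_right (by linarith) (by positivity)
end

section
/- Suppose m_+(x,k) = 1 + ∫_0^∞ B_+(x,y) e^{2iky} dy where, for each fixed x > 0, |B_+(x,y)| ≤ C·ρ^+(x+y) with ρ^+(u) = ∫_u^∞ |V(t)| dt and V ∈ L^1(ℝ) satisfying ∫(1+|t|)|V(t)|dt < ∞. Then the inverse Fourier transform of k ↦ m_+(x,k), as a tempered distribution, equals 2π δ₀ + π B_+(x, −u/2) (supported in u ≤ 0), and in particular is bounded in total variation by 2π δ₀ + c·χ_{u<0}·ρ^+(−u/2) with c independent of x > 0. -/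
open MeasureTheory Real FourierTransform Complex ENNReal


lemma absV_int (V : ℝ → ℝ) (hV : Integrable (fun t => (1 + |t|) * |V t|)) :
    Integrable (fun t => |V t|) := by
  have hmeas : AEStronglyMeasurable (fun t => |V t|) volume := by
    have h1 : AEStronglyMeasurable (fun t : ℝ => ((1 + |t|) * |V t|) * (1 + |t|)⁻¹) volume :=
      hV.aestronglyMeasurable.mul
        ((continuous_const.add _root_.continuous_abs).inv₀ (fun t => (add_pos_of_pos_of_nonneg one_pos (abs_nonneg t)).ne')).aestronglyMeasurable
    have h2 : (fun t : ℝ => ((1 + |t|) * |V t|) * (1 + |t|)⁻¹) = fun t => |V t| := by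
      funext t
      have ht : (1 : ℝ) + |t| ≠ 0 := by positivity
      field_simp
    rwa [h2] at h1
  refine hV.mono' hmeas (Filter.Eventually.of_forall fun t => ?_)
  have h0 := abs_nonneg (V t)
  have h1 := abs_nonneg t
  rw [Real.norm_eq_abs, _root_.abs_abs]
  nlinarith

lemma rho_anti (V : ℝ → ℝ) (hVi : Integrable (fun t => |V t|)) :
    Antitone (fun y => ∫ t in Set.Ioi y, |V t|) := by
  intro a b hab
  exact setIntegral_mono_set hVi.integrableOn
    (Filter.Eventually.of_forall fun t => abs_nonneg _)
    (Filter.Eventually.of_forall (Set.Ioi_subset_Ioi hab))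

lemma rho_nonneg (V : ℝ → ℝ) (y : ℝ) : 0 ≤ ∫ t in Set.Ioi y, |V t| :=
  setIntegral_nonneg measurableSet_Ioi fun t _ => abs_nonneg _


lemma rho_integrableOn (V : ℝ → ℝ) (hV : Integrable (fun t => (1 + |t|) * |V t|))
    (hVi : Integrable (fun t => |V t|))
    (hanti : Antitone (fun y => ∫ t in Set.Ioi y, |V t|)) :
    IntegrableOn (fun y => ∫ t in Set.Ioi y, |V t|) (Set.Ioi 0) := by
  set ρ : ℝ → ℝ := fun y => ∫ t in Set.Ioi y, |V t| with hρ
  obtain ⟨W, hWmeas, hWeq⟩ : ∃ W : ℝ → ℝ, Measurable W ∧ (fun t => |V t|) =ᵐ[volume] W := by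
    have h := hVi.aestronglyMeasurable.aemeasurable
    exact ⟨h.mk _, h.measurable_mk, h.ae_eq_mk⟩
  refine ⟨(hanti.measurable.aestronglyMeasurable).restrict, ?_⟩
  rw [hasFiniteIntegral_iff_ofReal (Filter.Eventually.of_forall fun y =>
    setIntegral_nonneg measurableSet_Ioi fun t _ => abs_nonneg _)]
  have key : ∀ y : ℝ, ENNReal.ofReal (ρ y) = ∫⁻ t, (Set.Ioi y).indicator
      (fun t => ENNReal.ofReal (W t)) t := by
    intro y
    rw [hρ]
    rw [ofReal_integral_eq_lintegral_ofReal hVi.integrableOn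
      (Filter.Eventually.of_forall fun t => abs_nonneg _)]
    rw [lintegral_indicator measurableSet_Ioi]
    exact lintegral_congr_ae ((ae_restrict_of_ae (hWeq.fun_comp ENNReal.ofReal)))
  calc ∫⁻ y in Set.Ioi 0, ENNReal.ofReal (ρ y)
      = ∫⁻ y in Set.Ioi 0, ∫⁻ t, (Set.Ioi y).indicator (fun t => ENNReal.ofReal (W t)) t := by
        exact lintegral_congr fun y => key y
    _ = ∫⁻ t, ∫⁻ y in Set.Ioi 0, (Set.Ioi y).indicator (fun t => ENNReal.ofReal (W t)) t := by
        apply lintegral_lintegral_swap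
        have : (Function.uncurry fun (y t : ℝ) =>
            (Set.Ioi y).indicator (fun t => ENNReal.ofReal (W t)) t) =
            {p : ℝ × ℝ | p.1 < p.2}.indicator (fun p => ENNReal.ofReal (W p.2)) := by
          funext p
          simp [Function.uncurry, Set.indicator, Set.mem_Ioi]
        rw [this]
        exact (((ENNReal.measurable_ofReal.comp hWmeas).comp measurable_snd).indicator
          (measurableSet_lt measurable_fst measurable_snd)).aemeasurable
    _ ≤ ∫⁻ t, ENNReal.ofReal ((1 + |t|) * |V t|) := by
        apply lintegral_mono_ae
        filter_upwards [hWeq] with t ht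
        have h1 : ∀ y : ℝ, (Set.Ioi y).indicator (fun _ : ℝ => ENNReal.ofReal (W t)) t =
            (Set.Iio t).indicator (fun _ : ℝ => ENNReal.ofReal (W t)) y := by
          intro y; simp only [Set.indicator, Set.mem_Ioi, Set.mem_Iio]
        calc ∫⁻ y in Set.Ioi 0, (Set.Ioi y).indicator (fun t => ENNReal.ofReal (W t)) t
            = ∫⁻ y in Set.Ioi 0, (Set.Iio t).indicator
                (fun _ => ENNReal.ofReal (W t)) y := by
              exact lintegral_congr fun y => h1 y
          _ = ENNReal.ofReal (W t) * (volume.restrict (Set.Ioi 0)) (Set.Iio t) := by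
              rw [lintegral_indicator_const measurableSet_Iio]
          _ ≤ ENNReal.ofReal ((1 + |t|) * |V t|) := by
              rw [Measure.restrict_apply measurableSet_Iio]
              have hsub : Set.Iio t ∩ Set.Ioi 0 = Set.Ioo 0 t := by
                ext z; simp [Set.mem_Ioo, and_comm]
              rw [hsub, Real.volume_Ioo, ← ht]
              rw [← ENNReal.ofReal_mul (abs_nonneg _)]
              apply ENNReal.ofReal_le_ofReal
              have h2 : t - 0 ≤ 1 + |t| := by
                have := abs_nonneg t; have := le_abs_self t; linarith
              nlinarith [abs_nonneg (V t), abs_nonneg t, le_abs_self t]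
    _ < ⊤ := by
        rw [← hasFiniteIntegral_iff_ofReal]
        · exact hV.hasFiniteIntegral
        · filter_upwards with t
          have := abs_nonneg (V t); have := abs_nonneg t; positivity


lemma main_part (V : ℝ → ℝ) (B : ℝ → ℝ → ℝ) (m : ℝ → ℝ → ℂ) (C : ℝ)
    (hVi : Integrable (fun t => |V t|))
    (hρint : IntegrableOn (fun y => ∫ t in Set.Ioi y, |V t|) (Set.Ioi 0))
    (hB_meas : Measurable (Function.uncurry B))
    (hB_supp : ∀ x : ℝ, ∀ y < (0 : ℝ), B x y = 0)
    (hB_bd : ∀ x y : ℝ, |B x y| ≤ C * ∫ t in Set.Ioi (x + y), |V t|)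
    (hm : ∀ x k : ℝ, m x k = 1 +
      ∫ y in Set.Ioi (0 : ℝ), (B x y : ℂ) * Complex.exp (2 * Complex.I * (k : ℂ) * (y : ℂ))) :
    (∀ x : ℝ, 0 < x → ∀ φ : SchwartzMap ℝ ℂ,
      (∫ k : ℝ, m x k * ∫ u : ℝ, φ u * Complex.exp (Complex.I * (k : ℂ) * (u : ℂ))) =
        2 * Real.pi * φ 0 + Real.pi * ∫ u : ℝ, (B x (-u / 2) : ℂ) * φ u) := by
  intro x hx φ
  have hπ : Real.pi ≠ 0 := Real.pi_ne_zero
  set ρ : ℝ → ℝ := fun y => ∫ t in Set.Ioi y, |V t| with hρdef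
  have hρnn : ∀ y, 0 ≤ ρ y := fun y => setIntegral_nonneg measurableSet_Ioi fun t _ => abs_nonneg _
  have hρanti : Antitone ρ := fun a b hab =>
    setIntegral_mono_set hVi.integrableOn
      (Filter.Eventually.of_forall fun t => abs_nonneg _)
      (Filter.Eventually.of_forall (Set.Ioi_subset_Ioi hab))
  -- Fourier transform of φ
  set Φ : ℝ → ℂ := 𝓕 ⇑φ with hΦdef
  have hΦint : Integrable Φ := by
    have := (SchwartzMap.fourierTransformCLM ℂ φ).integrable (μ := volume)
    rwa [SchwartzMap.fourierTransformCLM_apply] at this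
  have hΦcont : Continuous Φ := by
    have := (SchwartzMap.fourierTransformCLM ℂ φ).continuous
    rwa [SchwartzMap.fourierTransformCLM_apply] at this
  have hΦ0 : (∫ ξ : ℝ, Φ ξ) = φ 0 := by
    have hinv := Continuous.fourierInv_fourier_eq φ.continuous φ.integrable hΦint
    have h0 : 𝓕⁻ (𝓕 ⇑φ) 0 = ∫ ξ : ℝ, Φ ξ := by
      rw [Real.fourierInv_eq]; simp [hΦdef]
    rw [← h0, hinv]
  have hΦΦ : ∀ y : ℝ, 𝓕 Φ (2 * y) = φ (-(2 * y)) := by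
    intro y
    have hinv := Continuous.fourierInv_fourier_eq φ.continuous φ.integrable hΦint
    have := Real.fourierInv_eq_fourier_neg (𝓕 ⇑φ) (-(2 * y))
    rw [neg_neg] at this
    rw [hΦdef, ← this, hinv]
  -- step 1 : inner integral
  have step1 : ∀ k : ℝ, (∫ u : ℝ, φ u * Complex.exp (Complex.I * (k : ℂ) * (u : ℂ))) =
      Φ (-(k / (2 * Real.pi))) := by
    intro k
    rw [hΦdef, Real.fourier_real_eq_integral_exp_smul]
    apply integral_congr_ae
    filter_upwards with v
    rw [smul_eq_mul, mul_comm]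
    congr 1
    have h : -2 * Real.pi * v * -(k / (2 * Real.pi)) = k * v := by field_simp
    rw [h]; push_cast; ring
  -- measurability / integrability of B x
  have hBx : Measurable (B x) := hB_meas.comp measurable_prodMk_left
  have hBxint : IntegrableOn (fun y => B x y) (Set.Ioi 0) := by
    refine Integrable.mono' (hρint.const_mul (max C 0)) hBx.aestronglyMeasurable.restrict
      (Filter.Eventually.of_forall fun y => ?_)
    rw [Real.norm_eq_abs]
    calc |B x y| ≤ C * ρ (x + y) := hB_bd x y
      _ ≤ max C 0 * ρ (x + y) := mul_le_mul_of_nonneg_right (le_max_left _ _) (hρnn _)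
      _ ≤ max C 0 * ρ y := mul_le_mul_of_nonneg_left (hρanti (by linarith)) (le_max_right _ _)
  -- product integrand
  set G : ℝ × ℝ → ℂ := fun p => (B x p.2 : ℂ) *
      Complex.exp (2 * Complex.I * ((-(2 * Real.pi) * p.1 : ℝ) : ℂ) * (p.2 : ℂ)) * Φ p.1
    with hGdef
  have hexpnorm : ∀ r y : ℝ,
      ‖Complex.exp (2 * Complex.I * (r : ℂ) * (y : ℂ))‖ = 1 := by
    intro r y
    rw [Complex.norm_exp]
    have : (2 * Complex.I * (r : ℂ) * (y : ℂ)).re = 0 := by simp [Complex.mul_re]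
    rw [this, Real.exp_zero]
  have hGint : Integrable G (volume.prod (volume.restrict (Set.Ioi 0))) := by
    have hbound : Integrable (fun p : ℝ × ℝ => ‖Φ p.1‖ * |B x p.2|)
        (volume.prod (volume.restrict (Set.Ioi 0))) :=
      Integrable.mul_prod hΦint.norm hBxint.abs
    refine hbound.mono' ?_ (Filter.Eventually.of_forall fun p => ?_)
    · apply AEStronglyMeasurable.mul
      apply AEStronglyMeasurable.mul
      · exact (Complex.measurable_ofReal.comp (hBx.comp measurable_snd)).aestronglyMeasurable
      · apply Continuous.aestronglyMeasurable
        exact Complex.continuous_exp.comp <| ((continuous_const.mul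
          (Complex.continuous_ofReal.comp (continuous_const.mul continuous_fst))).mul
          (Complex.continuous_ofReal.comp continuous_snd))
      · exact (hΦcont.comp continuous_fst).aestronglyMeasurable
    · rw [hGdef]
      simp only [norm_mul, hexpnorm, mul_one, Complex.norm_real, Real.norm_eq_abs]
      rw [mul_comm]
  -- splitting the integrand
  have split : ∀ ξ : ℝ, m x (-(2 * Real.pi) * ξ) * Φ ξ =
      Φ ξ + ∫ y in Set.Ioi (0:ℝ), G (ξ, y) := by
    intro ξ
    rw [hm x (-(2 * Real.pi) * ξ), add_mul, one_mul, ← integral_mul_const]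
  -- evaluate the inner integral after swapping
  have inner_eval : ∀ y : ℝ, (∫ ξ : ℝ, G (ξ, y)) = (B x y : ℂ) * φ (-(2 * y)) := by
    intro y
    have h1 : (∫ ξ : ℝ, G (ξ, y)) = ∫ ξ : ℝ, (B x y : ℂ) *
        (Complex.exp (((-2 * Real.pi * ξ * (2 * y) : ℝ) : ℂ) * Complex.I) • Φ ξ) := by
      apply integral_congr_ae
      filter_upwards with ξ
      rw [hGdef, smul_eq_mul, mul_assoc]
      congr 2
      push_cast; ring
    rw [h1, integral_const_mul]
    congr 1
    rw [← Real.fourier_real_eq_integral_exp_smul, hΦΦ y]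
  -- change of variables in y
  have step6 : (∫ y in Set.Ioi (0:ℝ), (B x y : ℂ) * φ (-(2 * y))) =
      (2 : ℝ)⁻¹ • ∫ u : ℝ, (B x (-u / 2) : ℂ) * φ u := by
    set F : ℝ → ℂ := fun u => (B x (-u / 2) : ℂ) * φ u with hFdef
    have h2 : ∀ y : ℝ, F (-2 * y) = (B x y : ℂ) * φ (-(2 * y)) := by
      intro y
      have h : -(-2 * y) / 2 = y := by ring
      simp only [hFdef]
      rw [h]
      norm_num
    have h3 : (∫ y in Set.Ioi (0:ℝ), (B x y : ℂ) * φ (-(2 * y))) =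
        ∫ y : ℝ, F (-2 * y) := by
      rw [← MeasureTheory.integral_Ici_eq_integral_Ioi]
      rw [setIntegral_eq_integral_of_forall_compl_eq_zero (fun y hy => ?_)]
      · apply integral_congr_ae
        filter_upwards with y
        rw [h2 y]
      · rw [Set.mem_Ici, not_le] at hy
        rw [hB_supp x y hy]
        simp
    rw [h3, MeasureTheory.Measure.integral_comp_mul_left F (-2)]
    have habs2 : |((-2:ℝ))⁻¹| = (2:ℝ)⁻¹ := by norm_num
    rw [habs2]
  -- change of variables in k
  set g : ℝ → ℂ := fun k => m x k * Φ (-(k / (2 * Real.pi))) with hgdef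
  have hcv := MeasureTheory.Measure.integral_comp_mul_left g (-(2 * Real.pi))
  have habs : |(-(2 * Real.pi))⁻¹| = (2 * Real.pi)⁻¹ := by
    rw [abs_inv, abs_neg, abs_of_pos (by positivity)]
  rw [habs] at hcv
  -- main computation
  have main : (∫ k : ℝ, m x k * ∫ u : ℝ, φ u * Complex.exp (Complex.I * (k : ℂ) * (u : ℂ)))
      = (2 * Real.pi) • ∫ ξ : ℝ, m x (-(2 * Real.pi) * ξ) * Φ ξ := by
    have hL : (∫ k : ℝ, m x k * ∫ u : ℝ, φ u * Complex.exp (Complex.I * (k : ℂ) * (u : ℂ)))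
        = ∫ k : ℝ, g k := by
      apply integral_congr_ae
      filter_upwards with k
      rw [hgdef, step1 k]
    have hg2 : (∫ ξ : ℝ, g (-(2 * Real.pi) * ξ)) = ∫ ξ : ℝ, m x (-(2 * Real.pi) * ξ) * Φ ξ := by
      apply integral_congr_ae
      filter_upwards with ξ
      rw [hgdef]
      congr 2
      field_simp
    rw [hL, ← hg2]
    rw [hcv] at hg2 ⊢
    rw [smul_smul]
    rw [mul_inv_cancel₀ (by positivity), one_smul]
  -- evaluate the ξ-integral
  have hxi : (∫ ξ : ℝ, m x (-(2 * Real.pi) * ξ) * Φ ξ)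
      = φ 0 + (2 : ℝ)⁻¹ • ∫ u : ℝ, (B x (-u / 2) : ℂ) * φ u := by
    calc (∫ ξ : ℝ, m x (-(2 * Real.pi) * ξ) * Φ ξ)
        = ∫ ξ : ℝ, (Φ ξ + ∫ y in Set.Ioi (0:ℝ), G (ξ, y)) :=
          integral_congr_ae (Filter.Eventually.of_forall fun ξ => split ξ)
      _ = (∫ ξ : ℝ, Φ ξ) + ∫ ξ : ℝ, ∫ y in Set.Ioi (0:ℝ), G (ξ, y) :=
          integral_add hΦint hGint.integral_prod_left
      _ = φ 0 + ∫ y in Set.Ioi (0:ℝ), ∫ ξ : ℝ, G (ξ, y) := by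
          rw [hΦ0, MeasureTheory.integral_integral_swap (f := fun ξ y => G (ξ, y)) hGint]
      _ = φ 0 + ∫ y in Set.Ioi (0:ℝ), (B x y : ℂ) * φ (-(2 * y)) := by
          rw [integral_congr_ae (Filter.Eventually.of_forall fun y => inner_eval y)]
      _ = φ 0 + (2 : ℝ)⁻¹ • ∫ u : ℝ, (B x (-u / 2) : ℂ) * φ u := by rw [step6]
  rw [main, hxi]
  rw [smul_add, smul_smul, Complex.real_smul, Complex.real_smul]
  push_cast
  ring


lemma second_part (V : ℝ → ℝ) (B : ℝ → ℝ → ℝ) (C : ℝ)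
    (hVi : Integrable (fun t => |V t|))
    (hB_bd : ∀ x y : ℝ, |B x y| ≤ C * ∫ t in Set.Ioi (x + y), |V t|) :
    ∃ c > (0 : ℝ), ∀ x : ℝ, 0 < x → ∀ u : ℝ, u < 0 →
      Real.pi * |B x (-u / 2)| ≤ c * ∫ t in Set.Ioi (-u / 2), |V t| := by
  refine ⟨Real.pi * max C 0 + 1, by positivity, fun x hx u hu => ?_⟩
  have hI2 : (0:ℝ) ≤ ∫ t in Set.Ioi (-u / 2), |V t| :=
    setIntegral_nonneg measurableSet_Ioi fun t _ => abs_nonneg _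
  have hmono : (∫ t in Set.Ioi (x + -u / 2), |V t|) ≤ ∫ t in Set.Ioi (-u / 2), |V t| :=
    setIntegral_mono_set hVi.integrableOn
      (Filter.Eventually.of_forall fun t => abs_nonneg _)
      (Filter.Eventually.of_forall (Set.Ioi_subset_Ioi (by linarith)))
  have h1 : |B x (-u / 2)| ≤ max C 0 * ∫ t in Set.Ioi (-u / 2), |V t| := by
    have := hB_bd x (-u / 2)
    have hI1 : (0:ℝ) ≤ ∫ t in Set.Ioi (x + -u / 2), |V t| :=
      setIntegral_nonneg measurableSet_Ioi fun t _ => abs_nonneg _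
    calc |B x (-u / 2)| ≤ C * ∫ t in Set.Ioi (x + -u / 2), |V t| := this
      _ ≤ max C 0 * ∫ t in Set.Ioi (x + -u / 2), |V t| :=
          mul_le_mul_of_nonneg_right (le_max_left _ _) hI1
      _ ≤ max C 0 * ∫ t in Set.Ioi (-u / 2), |V t| :=
          mul_le_mul_of_nonneg_left hmono (le_max_right _ _)
  have hπ := Real.pi_pos
  calc Real.pi * |B x (-u / 2)| ≤ Real.pi * (max C 0 * ∫ t in Set.Ioi (-u / 2), |V t|) :=
        mul_le_mul_of_nonneg_left h1 hπ.le
    _ ≤ (Real.pi * max C 0 + 1) * ∫ t in Set.Ioi (-u / 2), |V t| := by nlinarith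


/-- Distributional inverse Fourier transform of the modified Jost function:
if `m₊(x,k) = 1 + ∫_0^∞ B₊(x,y)e^{2iky}dy` with `|B₊(x,y)| ≤ C ρ⁺(x+y)`,
`ρ⁺(u) = ∫_u^∞ |V|`, then `(m₊(x,·))^∨ = 2πδ₀ + π B₊(x,−u/2)` as tempered
distributions, and the density part is bounded by `c χ_{u<0} ρ⁺(−u/2)` uniformly in `x > 0`. -/
theorem m_plus_inverse_fourier (V : ℝ → ℝ) (B : ℝ → ℝ → ℝ) (m : ℝ → ℝ → ℂ) (C : ℝ)
    (hV : Integrable (fun t => (1 + |t|) * |V t|))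
    (hB_meas : Measurable (Function.uncurry B))
    (hB_supp : ∀ x : ℝ, ∀ y < (0 : ℝ), B x y = 0)
    (hB_bd : ∀ x y : ℝ, |B x y| ≤ C * ∫ t in Set.Ioi (x + y), |V t|)
    (hm : ∀ x k : ℝ, m x k = 1 +
      ∫ y in Set.Ioi (0 : ℝ), (B x y : ℂ) * Complex.exp (2 * Complex.I * (k : ℂ) * (y : ℂ))) :
    (∀ x : ℝ, 0 < x → ∀ φ : SchwartzMap ℝ ℂ,
      (∫ k : ℝ, m x k * ∫ u : ℝ, φ u * Complex.exp (Complex.I * (k : ℂ) * (u : ℂ))) =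
        2 * Real.pi * φ 0 + Real.pi * ∫ u : ℝ, (B x (-u / 2) : ℂ) * φ u) ∧
    ∃ c > (0 : ℝ), ∀ x : ℝ, 0 < x → ∀ u : ℝ, u < 0 →
      Real.pi * |B x (-u / 2)| ≤ c * ∫ t in Set.Ioi (-u / 2), |V t| := by
  have hVi := absV_int V hV
  have hρint := rho_integrableOn V hV hVi (rho_anti V hVi)
  exact ⟨main_part V B m C hVi hρint hB_meas hB_supp hB_bd hm,
    second_part V B C hVi hB_bd⟩
end
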